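/- arXiv:1710.10252 — 4 statements merged into one kernel-verified Lean document; each statement's English description precedes it below -/
import Mathlib

section
/- Let X_{AB} be positive definite on H_A ⊗ H_B with marginal X_A = Tr_B X_{AB}. The operator V : H_A ⊗ H_Â → H_A ⊗ H_B ⊗ H_Â ⊗ H_B̂ defined by V = (X_{AB}^{1/2}(X_A^{-1/2} ⊗ I_Â)) |Γ⟩_{BB̂} (i.e., v ↦ X_{AB}^{1/2}(X_A^{-1/2} ⊗ I_Â)(v ⊗ |Γ⟩_{BB̂}) with appropriate reordering of tensor factors) is an isometry: V†V = I. -/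
open Matrix Kronecker BigOperators
open scoped Classical ComplexOrder

/-- Apply a real function to a Hermitian matrix via the functional calculus
(eigenvalue decomposition); junk value `0` on non-Hermitian input. -/
noncomputable def matFun {n : Type} [Fintype n] [DecidableEq n]
    (f : ℝ → ℝ) (A : Matrix n n ℂ) : Matrix n n ℂ :=
  if hA : A.IsHermitian then
    (hA.eigenvectorUnitary : Matrix n n ℂ) *
      Matrix.diagonal (fun i => (f (hA.eigenvalues i) : ℂ)) *
      (star (hA.eigenvectorUnitary : Matrix n n ℂ))
  else 0

/-- The unnormalized maximally entangled vector `∑ i, |i⟩⊗|i⟩`. -/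
def gammaVec (n : Type) [DecidableEq n] : n × n → ℂ :=
  fun p => if p.1 = p.2 then 1 else 0

/-- Partial trace over the second tensor factor. -/
noncomputable def ptraceB {a b : Type} [Fintype b]
    (X : Matrix (a × b) (a × b) ℂ) : Matrix a a ℂ :=
  fun i j => ∑ k, X (i, k) (j, k)

/-- Matrix power `A ^ p` (real exponent) via the functional calculus. -/
noncomputable def mpow {n : Type} [Fintype n] [DecidableEq n]
    (A : Matrix n n ℂ) (p : ℝ) : Matrix n n ℂ :=
  matFun (fun x => x ^ p) A

/-- The matrix of the map `v ↦ M (v ⊗ |Γ⟩_{BB̂})` from `H_A ⊗ H_Â` to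
`H_A ⊗ H_B ⊗ H_Â ⊗ H_B̂` (indices grouped as `(A B) × (Â B̂)`), where `M` acts on `A B`
and the identity acts on `Â`; the `B̂` input slot is fed by `|Γ⟩_{BB̂}`. -/
noncomputable def petzIso {a b : Type} [Fintype a] [Fintype b] [DecidableEq a] [DecidableEq b]
    (M : Matrix (a × b) (a × b) ℂ) :
    Matrix ((a × b) × (a × b)) (a × a) ℂ :=
  fun o p => M o.1 (p.1, o.2.2) * (if o.2.1 = p.2 then 1 else 0)

/-- Mathlib's former `Matrix.PosSemidef.sqrt` (removed upstream), with its old definition. -/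
noncomputable def Matrix.PosSemidef.sqrt {n : Type*} [Fintype n] [DecidableEq n] {𝕜 : Type*} [RCLike 𝕜]
    {A : Matrix n n 𝕜} (hA : A.PosSemidef) : Matrix n n 𝕜 :=
  (hA.1.eigenvectorUnitary : Matrix n n 𝕜) * diagonal ((↑) ∘ (√·) ∘ hA.1.eigenvalues) *
    (star (hA.1.eigenvectorUnitary : Matrix n n 𝕜))

lemma psdSqrt_conjTranspose {n : Type} [Fintype n] [DecidableEq n]
    {A : Matrix n n ℂ} (hA : A.PosSemidef) : (PosSemidef.sqrt hA)ᴴ = PosSemidef.sqrt hA := by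
  simp only [PosSemidef.sqrt, conjTranspose_mul, diagonal_conjTranspose, star_eq_conjTranspose,
    conjTranspose_conjTranspose, Matrix.mul_assoc]
  congr 2
  congr 1
  ext i
  simp

lemma psdSqrt_mul_self {n : Type} [Fintype n] [DecidableEq n]
    {A : Matrix n n ℂ} (hA : A.PosSemidef) : PosSemidef.sqrt hA * PosSemidef.sqrt hA = A := by
  conv_rhs => rw [hA.1.spectral_theorem, Unitary.conjStarAlgAut_apply]
  have hU : (star (hA.1.eigenvectorUnitary : Matrix n n ℂ)) * (hA.1.eigenvectorUnitary : Matrix n n ℂ) = 1 :=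
    Unitary.coe_star_mul_self _
  simp only [PosSemidef.sqrt, Matrix.mul_assoc]
  rw [← Matrix.mul_assoc (star _) (hA.1.eigenvectorUnitary : Matrix n n ℂ), hU, Matrix.one_mul,
    ← Matrix.mul_assoc (diagonal _), diagonal_mul_diagonal]
  congr 3
  ext i
  simp only [Function.comp_apply]
  rw [← RCLike.ofReal_mul, Real.mul_self_sqrt (hA.eigenvalues_nonneg i)]

lemma petz_mul {a b : Type} [Fintype a] [Fintype b] [DecidableEq a] [DecidableEq b]
    (M : Matrix (a × b) (a × b) ℂ) :
    (petzIso M)ᴴ * petzIso M = (ptraceB (Mᴴ * M)) ⊗ₖ (1 : Matrix a a ℂ) := by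
  ext ⟨i, j⟩ ⟨k, l⟩
  rw [Matrix.mul_apply]
  simp only [conjTranspose_apply]
  have step1 : (∑ o : (a × b) × (a × b), star (petzIso M o (i, j)) * petzIso M o (k, l))
      = ∑ o : (a × b) × (a × b),
        (if o.2.1 = j ∧ o.2.1 = l then star (M o.1 (i, o.2.2)) * M o.1 (k, o.2.2) else 0) := by
    refine Finset.sum_congr rfl fun o _ => ?_
    by_cases h1 : o.2.1 = j <;> by_cases h2 : o.2.1 = l <;> simp [petzIso, h1, h2, apply_ite (starRingEnd ℂ)]
  rw [step1]
  by_cases hjl : j = l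
  · subst hjl
    simp only [and_self, kroneckerMap_apply, Matrix.one_apply_eq, mul_one]
    rw [Fintype.sum_prod_type]
    calc (∑ x : a × b, ∑ y : a × b,
          if y.1 = j then star (M x (i, y.2)) * M x (k, y.2) else 0)
        = ∑ x : a × b, ∑ y2 : b, star (M x (i, y2)) * M x (k, y2) := by
          refine Finset.sum_congr rfl fun x _ => ?_
          rw [Fintype.sum_prod_type, Finset.sum_comm]
          simp
      _ = ptraceB (Mᴴ * M) i k := by
          rw [Finset.sum_comm]
          simp [ptraceB, Matrix.mul_apply, conjTranspose_apply]
  · have : ∀ o : (a × b) × (a × b), ¬(o.2.1 = j ∧ o.2.1 = l) := by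
      rintro o ⟨h1, h2⟩; exact hjl (h1 ▸ h2)
    simp [this, kroneckerMap_apply, Matrix.one_apply, hjl]

lemma ptraceB_kronL {a b : Type} [Fintype a] [Fintype b] [DecidableEq a] [DecidableEq b]
    (N : Matrix a a ℂ) (Y : Matrix (a × b) (a × b) ℂ) :
    ptraceB ((N ⊗ₖ (1 : Matrix b b ℂ)) * Y) = N * ptraceB Y := by
  ext i j
  simp only [ptraceB, Matrix.mul_apply, kroneckerMap_apply, Matrix.one_apply,
    Fintype.sum_prod_type, ite_mul, one_mul, zero_mul, mul_ite, mul_zero,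
    Finset.sum_ite_eq, Finset.mem_univ, if_true, Finset.mul_sum]
  simp only [mul_one]
  exact Finset.sum_comm

lemma ptraceB_kronR {a b : Type} [Fintype a] [Fintype b] [DecidableEq a] [DecidableEq b]
    (N' : Matrix a a ℂ) (Y : Matrix (a × b) (a × b) ℂ) :
    ptraceB (Y * (N' ⊗ₖ (1 : Matrix b b ℂ))) = ptraceB Y * N' := by
  ext i j
  simp only [ptraceB, Matrix.mul_apply, kroneckerMap_apply, Matrix.one_apply,
    Fintype.sum_prod_type, ite_mul, one_mul, zero_mul, mul_ite, mul_zero, mul_one,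
    Finset.sum_ite_eq', Finset.mem_univ, if_true, Finset.sum_mul]
  exact Finset.sum_comm

lemma ptraceB_kron_mul {a b : Type} [Fintype a] [Fintype b] [DecidableEq a] [DecidableEq b]
    (N N' : Matrix a a ℂ) (X : Matrix (a × b) (a × b) ℂ) :
    ptraceB ((N ⊗ₖ (1 : Matrix b b ℂ)) * X * (N' ⊗ₖ (1 : Matrix b b ℂ))) =
      N * ptraceB X * N' := by
  rw [Matrix.mul_assoc, ptraceB_kronL, ptraceB_kronR, Matrix.mul_assoc]

/-- The operator `V = X_{AB}^{1/2}(X_A^{-1/2} ⊗ I_Â)|Γ⟩_{BB̂}` is an isometry: `V†V = I`. -/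
theorem stmt_8 (a b : ℕ) (XAB : Matrix (Fin a × Fin b) (Fin a × Fin b) ℂ)
    (hXAB : XAB.PosDef) (hXA : (ptraceB XAB).PosDef) :
    (petzIso (PosSemidef.sqrt hXAB.posSemidef *
        ((PosSemidef.sqrt hXA.posSemidef)⁻¹ ⊗ₖ (1 : Matrix (Fin b) (Fin b) ℂ))))ᴴ *
      petzIso (PosSemidef.sqrt hXAB.posSemidef *
        ((PosSemidef.sqrt hXA.posSemidef)⁻¹ ⊗ₖ (1 : Matrix (Fin b) (Fin b) ℂ))) = 1 := by
  set S := PosSemidef.sqrt hXAB.posSemidef with hS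
  set T := PosSemidef.sqrt hXA.posSemidef with hT
  have hSh : Sᴴ = S := psdSqrt_conjTranspose hXAB.posSemidef
  have hTh : Tᴴ = T := psdSqrt_conjTranspose hXA.posSemidef
  have hTdet : IsUnit T.det := by
    have h2 : T.det * T.det = (ptraceB XAB).det := by
      rw [← det_mul, psdSqrt_mul_self hXA.posSemidef]
    have hne : (ptraceB XAB).det ≠ 0 := ne_of_gt hXA.det_pos
    exact isUnit_iff_ne_zero.mpr (fun h => hne (by rw [← h2, h, mul_zero]))
  have hNh : (T⁻¹)ᴴ = T⁻¹ := by rw [Matrix.conjTranspose_nonsing_inv, hTh]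
  have hkron : (T⁻¹ ⊗ₖ (1 : Matrix (Fin b) (Fin b) ℂ))ᴴ =
      T⁻¹ ⊗ₖ (1 : Matrix (Fin b) (Fin b) ℂ) := by
    ext ⟨i, k⟩ ⟨j, l⟩
    have hij : star (T⁻¹ j i) = T⁻¹ i j := congrFun (congrFun hNh i) j
    have hone : star ((1 : Matrix (Fin b) (Fin b) ℂ) l k)
        = (1 : Matrix (Fin b) (Fin b) ℂ) k l := by
      simp [Matrix.one_apply, apply_ite (star : ℂ → ℂ), eq_comm]
    simp only [conjTranspose_apply, kroneckerMap_apply, star_mul', hij, hone]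
  rw [petz_mul]
  have hMHM : (S * (T⁻¹ ⊗ₖ (1 : Matrix (Fin b) (Fin b) ℂ)))ᴴ *
      (S * (T⁻¹ ⊗ₖ (1 : Matrix (Fin b) (Fin b) ℂ))) =
      (T⁻¹ ⊗ₖ (1 : Matrix (Fin b) (Fin b) ℂ)) * XAB *
        (T⁻¹ ⊗ₖ (1 : Matrix (Fin b) (Fin b) ℂ)) := by
    rw [conjTranspose_mul, hkron, hSh, Matrix.mul_assoc, ← Matrix.mul_assoc S,
      psdSqrt_mul_self hXAB.posSemidef, ← Matrix.mul_assoc]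
  rw [hMHM, ptraceB_kron_mul]
  have key : T⁻¹ * ptraceB XAB * T⁻¹ = 1 := by
    calc T⁻¹ * ptraceB XAB * T⁻¹ = T⁻¹ * (T * T) * T⁻¹ := by
          rw [psdSqrt_mul_self hXA.posSemidef]
      _ = T⁻¹ * T * (T * T⁻¹) := by
          rw [Matrix.mul_assoc, Matrix.mul_assoc, Matrix.mul_assoc]
      _ = 1 := by rw [Matrix.nonsing_inv_mul _ hTdet, Matrix.mul_nonsing_inv _ hTdet, one_mul]
  rw [key]
  ext ⟨i, j⟩ ⟨k, l⟩
  by_cases h1 : i = k <;> by_cases h2 : j = l <;>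
    simp [Matrix.one_apply, Prod.ext_iff, h1, h2]
end

section
/- For α ∈ [1/2,1), positive definite X and Y on ℂ^d: sup over positive definite density operators τ of [−Tr{X^{1/2} Y^{(1−α)/α} X^{1/2} τ^{(α−1)/α}}] = −‖X^{1/2} Y^{(1−α)/α} X^{1/2}‖_α, where ‖Z‖_α = (Tr Z^α)^{1/α} for Z positive semi-definite. -/
open Matrix Kronecker BigOperators
open scoped Classical ComplexOrder

namespace RevHolder

variable {n : Type} [Fintype n] [DecidableEq n]

lemma coe_mul_star (U : Matrix.unitaryGroup n ℂ) :
    (U : Matrix n n ℂ) * star (U : Matrix n n ℂ) = 1 :=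
  (Matrix.mem_unitaryGroup_iff).mp U.2

lemma star_mul_coe (U : Matrix.unitaryGroup n ℂ) :
    star (U : Matrix n n ℂ) * (U : Matrix n n ℂ) = 1 :=
  (Matrix.mem_unitaryGroup_iff').mp U.2

lemma isHermitian_conj_diag (U : Matrix.unitaryGroup n ℂ) (a : n → ℝ) :
    ((U : Matrix n n ℂ) * Matrix.diagonal (fun i => (a i : ℂ)) *
      star (U : Matrix n n ℂ)).IsHermitian := by
  have hD : (Matrix.diagonal (fun i => (a i : ℂ))).IsHermitian := by
    have h : (star fun i => ((a i : ℝ) : ℂ)) = fun i => ((a i : ℝ) : ℂ) := by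
      funext i
      exact Complex.conj_ofReal _
    rw [Matrix.IsHermitian, Matrix.diagonal_conjTranspose, h]
  have := Matrix.isHermitian_mul_mul_conjTranspose (U : Matrix n n ℂ) hD
  simpa [Matrix.star_eq_conjTranspose] using this

lemma trace_conj_diag (U : Matrix.unitaryGroup n ℂ) (c : n → ℂ) :
    ((U : Matrix n n ℂ) * Matrix.diagonal c * star (U : Matrix n n ℂ)).trace = ∑ i, c i := by
  rw [Matrix.trace_mul_cycle, star_mul_coe, Matrix.one_mul, Matrix.trace_diagonal]


/-- well-definedness of the functional calculus -/
lemma star_mul_coe_assoc (U : Matrix.unitaryGroup n ℂ) (B : Matrix n n ℂ) :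
    star (U : Matrix n n ℂ) * ((U : Matrix n n ℂ) * B) = B := by
  rw [← Matrix.mul_assoc, star_mul_coe, Matrix.one_mul]

lemma coe_mul_star_assoc (U : Matrix.unitaryGroup n ℂ) (B : Matrix n n ℂ) :
    (U : Matrix n n ℂ) * (star (U : Matrix n n ℂ) * B) = B := by
  rw [← Matrix.mul_assoc, coe_mul_star, Matrix.one_mul]

lemma matFun_conj_diag (f : ℝ → ℝ) (U : Matrix.unitaryGroup n ℂ) (a : n → ℝ) :
    matFun f ((U : Matrix n n ℂ) * Matrix.diagonal (fun i => (a i : ℂ)) *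
        star (U : Matrix n n ℂ)) =
      (U : Matrix n n ℂ) * Matrix.diagonal (fun i => (f (a i) : ℂ)) *
        star (U : Matrix n n ℂ) := by
  set A : Matrix n n ℂ := (U : Matrix n n ℂ) * Matrix.diagonal (fun i => (a i : ℂ)) *
    star (U : Matrix n n ℂ) with hAdef
  have hA : A.IsHermitian := isHermitian_conj_diag U a
  rw [matFun, dif_pos hA]
  set V : Matrix.unitaryGroup n ℂ := hA.eigenvectorUnitary with hVdef
  have hspec : (V : Matrix n n ℂ) * Matrix.diagonal (fun i => (hA.eigenvalues i : ℂ)) *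
      star (V : Matrix n n ℂ) = A := by
    have := hA.spectral_theorem
    rw [Unitary.conjStarAlgAut_apply] at this
    exact this.symm
  have hcomm : Matrix.diagonal (fun i => (hA.eigenvalues i : ℂ)) *
        (star (V : Matrix n n ℂ) * (U : Matrix n n ℂ)) =
      star (V : Matrix n n ℂ) * (U : Matrix n n ℂ) * Matrix.diagonal (fun i => (a i : ℂ)) := by
    have h1 := congrArg
      (fun B => star (V : Matrix n n ℂ) * B * (U : Matrix n n ℂ)) (hspec.trans hAdef)
    simp only [Matrix.mul_assoc, star_mul_coe, coe_mul_star, star_mul_coe_assoc,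
      coe_mul_star_assoc, Matrix.one_mul, Matrix.mul_one] at h1
    exact h1.trans (Matrix.mul_assoc _ _ _).symm
  have hentry : ∀ i j, (hA.eigenvalues i : ℂ) *
      (star (V : Matrix n n ℂ) * (U : Matrix n n ℂ)) i j =
      (star (V : Matrix n n ℂ) * (U : Matrix n n ℂ)) i j * (a j : ℂ) := by
    intro i j
    have h2 := congrFun (congrFun hcomm i) j
    simpa [Matrix.diagonal_mul, Matrix.mul_diagonal] using h2
  have hfcomm : Matrix.diagonal (fun i => (f (hA.eigenvalues i) : ℂ)) *
        (star (V : Matrix n n ℂ) * (U : Matrix n n ℂ)) =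
      (star (V : Matrix n n ℂ) * (U : Matrix n n ℂ)) *
        Matrix.diagonal (fun i => (f (a i) : ℂ)) := by
    ext i j
    simp only [Matrix.diagonal_mul, Matrix.mul_diagonal]
    by_cases h : (star (V : Matrix n n ℂ) * (U : Matrix n n ℂ)) i j = 0
    · simp [h]
    · have heq : (hA.eigenvalues i : ℂ) = (a j : ℂ) := by
        have h2 := hentry i j
        rw [mul_comm ((star (V : Matrix n n ℂ) * (U : Matrix n n ℂ)) i j) ((a j : ℂ))] at h2
        exact mul_right_cancel₀ h h2
      have heq' : hA.eigenvalues i = a j := by exact_mod_cast heq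
      rw [heq', mul_comm]
  have h3 := congrArg
    (fun B => (V : Matrix n n ℂ) * B * star (U : Matrix n n ℂ)) hfcomm
  simp only [Matrix.mul_assoc, star_mul_coe, coe_mul_star, star_mul_coe_assoc,
    coe_mul_star_assoc, Matrix.one_mul, Matrix.mul_one] at h3
  simpa only [Matrix.mul_assoc] using h3


lemma row_sum_normSq {M : Matrix n n ℂ} (h : M * Mᴴ = 1) (i : n) :
    ∑ j, Complex.normSq (M i j) = 1 := by
  have h1 := congrFun (congrFun h i) i
  simp only [Matrix.mul_apply, Matrix.conjTranspose_apply, Matrix.one_apply_eq] at h1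
  have h2 : ∑ j, ((Complex.normSq (M i j) : ℂ)) = 1 := by
    rw [← h1]
    refine Finset.sum_congr rfl fun j _ => ?_
    exact (Complex.mul_conj _).symm
  have h3 : (((∑ j, Complex.normSq (M i j) : ℝ)) : ℂ) = 1 := by
    push_cast
    exact h2
  exact_mod_cast h3

lemma col_sum_normSq {M : Matrix n n ℂ} (h : Mᴴ * M = 1) (j : n) :
    ∑ i, Complex.normSq (M i j) = 1 := by
  have := row_sum_normSq (M := Mᴴ) (by rw [Matrix.conjTranspose_conjTranspose, h]) j
  simpa [Matrix.conjTranspose_apply, Complex.normSq_conj] using this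

lemma trace_pair (U V : Matrix.unitaryGroup n ℂ) (a b : n → ℝ) :
    (((U : Matrix n n ℂ) * Matrix.diagonal (fun i => (a i : ℂ)) * star (U : Matrix n n ℂ)) *
      ((V : Matrix n n ℂ) * Matrix.diagonal (fun i => (b i : ℂ)) * star (V : Matrix n n ℂ))).trace
      = ((∑ i, ∑ j, a i * b j *
          Complex.normSq ((star (U : Matrix n n ℂ) * (V : Matrix n n ℂ)) i j) : ℝ) : ℂ) := by
  set M : Matrix n n ℂ := star (U : Matrix n n ℂ) * (V : Matrix n n ℂ) with hM
  have h1 : ((U : Matrix n n ℂ) * Matrix.diagonal (fun i => (a i : ℂ)) *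
      star (U : Matrix n n ℂ)) *
      ((V : Matrix n n ℂ) * Matrix.diagonal (fun i => (b i : ℂ)) * star (V : Matrix n n ℂ)) =
      (U : Matrix n n ℂ) * (Matrix.diagonal (fun i => (a i : ℂ)) * M *
        Matrix.diagonal (fun i => (b i : ℂ)) * Mᴴ) * star (U : Matrix n n ℂ) := by
    have hMH : Mᴴ = star (V : Matrix n n ℂ) * (U : Matrix n n ℂ) := by
      rw [hM, ← Matrix.star_eq_conjTranspose, StarMul.star_mul, star_star]
    rw [hMH, hM]
    simp only [Matrix.mul_assoc, coe_mul_star, star_mul_coe, coe_mul_star_assoc,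
      star_mul_coe_assoc, Matrix.one_mul, Matrix.mul_one]
  rw [h1, Matrix.trace_mul_cycle, ← Matrix.mul_assoc, star_mul_coe, Matrix.one_mul]
  have h2 : (Matrix.diagonal (fun i => (a i : ℂ)) * M * Matrix.diagonal (fun i => (b i : ℂ)) *
      Mᴴ).trace = ∑ i, ∑ j, ((a i : ℂ) * M i j * (b j : ℂ)) * star (M i j) := by
    rw [Matrix.trace]
    refine Finset.sum_congr rfl fun i _ => ?_
    simp only [Matrix.diag]
    rw [Matrix.mul_apply]
    refine Finset.sum_congr rfl fun j _ => ?_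
    rw [Matrix.mul_diagonal, Matrix.diagonal_mul, Matrix.conjTranspose_apply]
  rw [h2]
  push_cast
  refine Finset.sum_congr rfl fun i _ => Finset.sum_congr rfl fun j _ => ?_
  have hst : star (M i j) = (starRingEnd ℂ) (M i j) := rfl
  rw [hst, ← Complex.mul_conj]
  ring


lemma posDef_mul_mul_conjTranspose {A M : Matrix n n ℂ} (hA : A.PosDef) (hM : IsUnit M) :
    (M * A * Mᴴ).PosDef := by
  refine Matrix.PosDef.of_dotProduct_mulVec_pos (hA.posSemidef.mul_mul_conjTranspose_same M).1 fun x hx => ?_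
  have hMH : IsUnit Mᴴ := by
    rw [Matrix.isUnit_iff_isUnit_det, Matrix.det_conjTranspose]
    exact ((Matrix.isUnit_iff_isUnit_det M).mp hM).star
  have hinj : Function.Injective (Mᴴ).mulVec := Matrix.mulVec_injective_iff_isUnit.mpr hMH
  have hx' : Mᴴ *ᵥ x ≠ 0 := by
    intro h
    exact hx (hinj (h.trans (Matrix.mulVec_zero Mᴴ).symm))
  have e : M * A * Mᴴ = (Mᴴ)ᴴ * A * Mᴴ := by rw [Matrix.conjTranspose_conjTranspose]
  rw [e]
  simpa only [Matrix.star_mulVec, Matrix.dotProduct_mulVec, Matrix.vecMul_vecMul]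
    using hA.dotProduct_mulVec_pos hx'

lemma posDef_conj_diag (U : Matrix.unitaryGroup n ℂ) {a : n → ℝ} (ha : ∀ i, 0 < a i) :
    ((U : Matrix n n ℂ) * Matrix.diagonal (fun i => (a i : ℂ)) *
      star (U : Matrix n n ℂ)).PosDef := by
  have hD : (Matrix.diagonal (fun i => (a i : ℂ))).PosDef :=
    Matrix.PosDef.diagonal fun i => by exact_mod_cast ha i
  have hU : IsUnit (U : Matrix n n ℂ) := by
    rw [Matrix.isUnit_iff_isUnit_det]
    exact IsUnit.of_mul_eq_one _ (Matrix.det_of_mem_unitary U.2).2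
  have := posDef_mul_mul_conjTranspose hD hU
  simpa [Matrix.star_eq_conjTranspose] using this

/-- scalar reverse Young inequality with the optimal scaling baked in -/
lemma scalar_key {α T w t : ℝ} (hα0 : 0 < α) (hα1 : α < 1) (hT : 0 < T)
    (hw : 0 < w) (ht : 0 < t) :
    T ^ ((1 - α)/α) * w ^ α / α - (1 - α)/α * (T ^ (1/α) * t) ≤ w * t ^ ((α - 1)/α) := by
  set r : ℝ := (α - 1)/α with hr
  set L : ℝ := T ^ ((α - 1)/α) with hL
  have hLpos : 0 < L := Real.rpow_pos_of_pos hT _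
  have htr : 0 < t ^ r := Real.rpow_pos_of_pos ht _
  have hwf : 0 < w * t ^ r * L := by positivity
  have hcf : 0 < t ^ r * L := by positivity
  have hpq : (α⁻¹).HolderConjugate ((1 - α)⁻¹) := Real.HolderConjugate.inv_one_sub_inv hα0 hα1
  have hyoung := Real.young_inequality_of_nonneg
    (Real.rpow_nonneg hwf.le α) (Real.rpow_nonneg hcf.le (-α)) hpq
  -- simplify the three pieces
  have e1 : (w * t ^ r * L) ^ α * (t ^ r * L) ^ (-α) = w ^ α := by
    rw [mul_assoc, Real.mul_rpow hw.le hcf.le, mul_assoc, ← Real.rpow_add hcf,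
      add_neg_cancel, Real.rpow_zero, mul_one]
  have e2 : ((w * t ^ r * L) ^ α) ^ (α⁻¹) = w * t ^ r * L := by
    rw [← Real.rpow_mul hwf.le, mul_inv_cancel₀ hα0.ne', Real.rpow_one]
  have e3 : ((t ^ r * L) ^ (-α)) ^ ((1 - α)⁻¹) = t * T := by
    rw [← Real.rpow_mul hcf.le, Real.mul_rpow htr.le hLpos.le, ← Real.rpow_mul ht.le, hL,
      ← Real.rpow_mul hT.le]
    have hα' : α ≠ 0 := hα0.ne'
    have h1α : (1 : ℝ) - α ≠ 0 := by
      have : (0:ℝ) < 1 - α := by linarith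
      exact this.ne'
    have c2 : (α - 1)/α * (-α * (1 - α)⁻¹) = 1 := by
      field_simp
      ring
    have c1 : r * (-α * (1 - α)⁻¹) = 1 := c2
    rw [c1, Real.rpow_one, Real.rpow_one]
  rw [e1, e2, e3] at hyoung
  -- hyoung : w ^ α ≤ (w * t ^ r * L) / α⁻¹ + (t * T) / (1 - α)⁻¹
  have hyoung' : w ^ α ≤ α * (w * t ^ r * L) + (1 - α) * (t * T) := by
    rw [div_eq_mul_inv, div_eq_mul_inv, inv_inv, inv_inv] at hyoung
    linarith [hyoung]
  have hE1 : T ^ ((1 - α)/α) * L = 1 := by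
    rw [hL, ← Real.rpow_add hT]
    have : (1 - α)/α + (α - 1)/α = 0 := by ring
    rw [this, Real.rpow_zero]
  have hE2 : T ^ (1/α) * L = T := by
    rw [hL, ← Real.rpow_add hT]
    have : 1/α + (α - 1)/α = 1 := by field_simp; ring
    rw [this, Real.rpow_one]
  have hmul : (T ^ ((1 - α)/α) * w ^ α / α - (1 - α)/α * (T ^ (1/α) * t)) * (α * L) ≤
      (w * t ^ ((α - 1)/α)) * (α * L) := by
    have expand : (T ^ ((1 - α)/α) * w ^ α / α - (1 - α)/α * (T ^ (1/α) * t)) * (α * L) =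
        w ^ α - (1 - α) * (t * T) := by
      have hα' : α ≠ 0 := hα0.ne'
      rw [show (T ^ ((1 - α)/α) * w ^ α / α - (1 - α)/α * (T ^ (1/α) * t)) * (α * L) =
          w ^ α * (T ^ ((1 - α)/α) * L) - (1 - α) * t * (T ^ (1/α) * L) by field_simp,
        hE1, hE2]
      ring
    rw [expand, ← hr]
    have : w * t ^ r * (α * L) = α * (w * t ^ r * L) := by ring
    rw [this]
    linarith [hyoung']
  have hαL : 0 < α * L := by positivity
  have := le_of_mul_le_mul_right hmul hαL
  rwa [← hr] at this


lemma spectral {A : Matrix n n ℂ} (hA : A.IsHermitian) :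
    A = (hA.eigenvectorUnitary : Matrix n n ℂ) *
      Matrix.diagonal (fun i => (hA.eigenvalues i : ℂ)) *
      star (hA.eigenvectorUnitary : Matrix n n ℂ) := by
  have := hA.spectral_theorem
  rw [Unitary.conjStarAlgAut_apply] at this
  exact this

lemma sum_lower {α : ℝ} (hα0 : 0 < α) (hα1 : α < 1) {w t : n → ℝ}
    (hw : ∀ i, 0 < w i) (ht : ∀ j, 0 < t j) (htsum : ∑ j, t j = 1)
    {c : n → n → ℝ} (hc : ∀ i j, 0 ≤ c i j)
    (hrow : ∀ i, ∑ j, c i j = 1) (hcol : ∀ j, ∑ i, c i j = 1)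
    (hT : 0 < ∑ i, w i ^ α) :
    (∑ i, w i ^ α) ^ (1/α) ≤ ∑ i, ∑ j, w i * t j ^ ((α - 1)/α) * c i j := by
  set T := ∑ i, w i ^ α with hTdef
  have key : ∀ i j, (T ^ ((1-α)/α) * w i ^ α / α - (1-α)/α * (T ^ (1/α) * t j)) * c i j
      ≤ w i * t j ^ ((α-1)/α) * c i j :=
    fun i j => mul_le_mul_of_nonneg_right (scalar_key hα0 hα1 hT (hw i) (ht j)) (hc i j)
  have hsum : ∑ i, ∑ j, (T ^ ((1-α)/α) * w i ^ α / α - (1-α)/α * (T ^ (1/α) * t j)) * c i j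
      ≤ ∑ i, ∑ j, w i * t j ^ ((α-1)/α) * c i j :=
    Finset.sum_le_sum fun i _ => Finset.sum_le_sum fun j _ => key i j
  refine le_trans (le_of_eq ?_) hsum
  have split1 : ∀ i, ∑ j, (T ^ ((1-α)/α) * w i ^ α / α - (1-α)/α * (T ^ (1/α) * t j)) * c i j
      = (T ^ ((1-α)/α) * w i ^ α / α) * (∑ j, c i j)
        - ∑ j, ((1-α)/α * (T ^ (1/α) * t j)) * c i j := by
    intro i
    rw [Finset.mul_sum, ← Finset.sum_sub_distrib]
    exact Finset.sum_congr rfl fun j _ => by ring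
  have split : ∑ i, ∑ j, (T ^ ((1-α)/α) * w i ^ α / α - (1-α)/α * (T ^ (1/α) * t j)) * c i j
      = (∑ i, (T ^ ((1-α)/α) * w i ^ α / α) * (∑ j, c i j))
        - ∑ j, ((1-α)/α * (T ^ (1/α) * t j)) * (∑ i, c i j) := by
    rw [Finset.sum_congr rfl fun i _ => split1 i, Finset.sum_sub_distrib]
    congr 1
    rw [Finset.sum_comm]
    exact Finset.sum_congr rfl fun j _ => (Finset.mul_sum _ _ _).symm
  rw [split]
  simp only [hrow, hcol, mul_one]
  have hsum1 : ∑ i, T ^ ((1-α)/α) * w i ^ α / α = T ^ ((1-α)/α) * T / α := by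
    rw [hTdef, Finset.mul_sum, Finset.sum_div]
  have hsum2 : ∑ j, (1-α)/α * (T ^ (1/α) * t j) = (1-α)/α * T ^ (1/α) := by
    rw [← Finset.mul_sum, ← Finset.mul_sum, htsum, mul_one]
  rw [hsum1, hsum2]
  have hP : T ^ ((1-α)/α) * T = T ^ (1/α) := by
    nth_rewrite 2 [← Real.rpow_one T]
    rw [← Real.rpow_add hT]
    congr 1
    field_simp
    ring
  rw [hP]
  have hα' : α ≠ 0 := hα0.ne'
  field_simp
  ring

lemma mpow_isHermitian {A : Matrix n n ℂ} (hA : A.IsHermitian) (p : ℝ) :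
    (mpow A p).IsHermitian := by
  rw [mpow, matFun, dif_pos hA]
  exact isHermitian_conj_diag _ _

lemma mpow_posDef {A : Matrix n n ℂ} (hA : A.PosDef) (p : ℝ) : (mpow A p).PosDef := by
  rw [mpow, matFun, dif_pos hA.isHermitian]
  exact posDef_conj_diag _ fun i => Real.rpow_pos_of_pos (hA.eigenvalues_pos i) p

end RevHolder



/-- Reverse-Hölder variational formula for `α ∈ [1/2,1)`:
`sup_{τ>0,Trτ=1} [−Tr{X^{1/2} Y^{(1−α)/α} X^{1/2} τ^{(α−1)/α}}]
  = −‖X^{1/2} Y^{(1−α)/α} X^{1/2}‖_α` where `‖Z‖_α = (Tr Z^α)^{1/α}`. -/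
theorem stmt_14 (d : ℕ) (α : ℝ) (hα1 : 1/2 ≤ α) (hα2 : α < 1)
    (X Y : Matrix (Fin d) (Fin d) ℂ) (hX : X.PosDef) (hY : Y.PosDef) :
    (⨆ τ : {τ : Matrix (Fin d) (Fin d) ℂ // τ.PosDef ∧ τ.trace = 1},
        (-((mpow X (1/2) * mpow Y ((1 - α)/α) * mpow X (1/2) *
            mpow (τ : Matrix (Fin d) (Fin d) ℂ) ((α - 1)/α)).trace.re))) =
      -(((mpow (mpow X (1/2) * mpow Y ((1 - α)/α) * mpow X (1/2)) α).trace.re) ^ (1/α)) := by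
  have hα0 : (0:ℝ) < α := by linarith [hα1]
  set W : Matrix (Fin d) (Fin d) ℂ :=
    mpow X (1/2) * mpow Y ((1 - α)/α) * mpow X (1/2) with hWdef
  have hX2 : (mpow X (1/2)).PosDef := RevHolder.mpow_posDef hX _
  have hYp : (mpow Y ((1 - α)/α)).PosDef := RevHolder.mpow_posDef hY _
  have hW : W.PosDef := by
    have hXh2 : (mpow X (1/2))ᴴ = mpow X (1/2) := RevHolder.mpow_isHermitian hX.isHermitian _
    have h := RevHolder.posDef_mul_mul_conjTranspose hYp hX2.isUnit
    rw [hXh2] at h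
    exact h
  have hWtr : (mpow W α).trace = ((∑ i, hW.isHermitian.eigenvalues i ^ α : ℝ) : ℂ) := by
    rw [mpow, matFun, dif_pos hW.isHermitian, RevHolder.trace_conj_diag]
    push_cast
    rfl
  set T : ℝ := ∑ i, hW.isHermitian.eigenvalues i ^ α with hTdef
  have hRHSre : (mpow W α).trace.re = T := by rw [hWtr]; exact Complex.ofReal_re _
  rw [hRHSre]
  rcases isEmpty_or_nonempty (Fin d) with hd | hd
  · have hTzero : T = 0 := by rw [hTdef]; simp
    have hemp : IsEmpty {τ : Matrix (Fin d) (Fin d) ℂ // τ.PosDef ∧ τ.trace = 1} := by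
      constructor
      rintro ⟨τ, hτpd, hτtr⟩
      have h0 : τ.trace = 0 := by simp [Matrix.trace]
      rw [h0] at hτtr
      exact one_ne_zero hτtr.symm
    rw [Real.iSup_of_isEmpty, hTzero, Real.zero_rpow (one_div_ne_zero hα0.ne'), neg_zero]
  · have hwpos : ∀ i, 0 < hW.isHermitian.eigenvalues i := hW.eigenvalues_pos
    have hTpos : 0 < T := by
      rw [hTdef]
      exact Finset.sum_pos (fun i _ => Real.rpow_pos_of_pos (hwpos i) α) Finset.univ_nonempty
    have hWspec : W = (hW.isHermitian.eigenvectorUnitary : Matrix (Fin d) (Fin d) ℂ) *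
        Matrix.diagonal (fun i => (hW.isHermitian.eigenvalues i : ℂ)) *
        star (hW.isHermitian.eigenvectorUnitary : Matrix (Fin d) (Fin d) ℂ) :=
      RevHolder.spectral hW.isHermitian
    have hapos : ∀ i, 0 < hW.isHermitian.eigenvalues i ^ α / T :=
      fun i => div_pos (Real.rpow_pos_of_pos (hwpos i) α) hTpos
    set τ0 : Matrix (Fin d) (Fin d) ℂ :=
      (hW.isHermitian.eigenvectorUnitary : Matrix (Fin d) (Fin d) ℂ) *
        Matrix.diagonal (fun i => ((hW.isHermitian.eigenvalues i ^ α / T : ℝ) : ℂ)) *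
        star (hW.isHermitian.eigenvectorUnitary : Matrix (Fin d) (Fin d) ℂ) with hτ0
    have hτ0pd : τ0.PosDef := RevHolder.posDef_conj_diag _ hapos
    have hτ0tr : τ0.trace = 1 := by
      rw [hτ0, RevHolder.trace_conj_diag]
      have h1 : ∑ i, ((hW.isHermitian.eigenvalues i ^ α / T : ℝ) : ℂ)
          = ((∑ i, hW.isHermitian.eigenvalues i ^ α / T : ℝ) : ℂ) := by push_cast; rfl
      have h2 : ∑ i, hW.isHermitian.eigenvalues i ^ α / T = 1 := by
        rw [← Finset.sum_div, ← hTdef, div_self hTpos.ne']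
      rw [h1, h2, Complex.ofReal_one]
    have hmp0 : mpow τ0 ((α - 1)/α) =
        (hW.isHermitian.eigenvectorUnitary : Matrix (Fin d) (Fin d) ℂ) *
        Matrix.diagonal (fun i => (((hW.isHermitian.eigenvalues i ^ α / T) ^ ((α - 1)/α) : ℝ) : ℂ)) *
        star (hW.isHermitian.eigenvectorUnitary : Matrix (Fin d) (Fin d) ℂ) := by
      rw [hτ0, mpow]
      exact RevHolder.matFun_conj_diag _ _ _
    have hval : (W * mpow τ0 ((α - 1)/α)).trace.re = T ^ (1/α) := by
      rw [hmp0]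
      nth_rewrite 1 [hWspec]
      rw [RevHolder.trace_pair, Complex.ofReal_re, RevHolder.star_mul_coe]
      have hdiag : ∀ i : Fin d, ∑ j, hW.isHermitian.eigenvalues i *
          (hW.isHermitian.eigenvalues j ^ α / T) ^ ((α - 1)/α) *
          Complex.normSq ((1 : Matrix (Fin d) (Fin d) ℂ) i j)
          = hW.isHermitian.eigenvalues i *
            (hW.isHermitian.eigenvalues i ^ α / T) ^ ((α - 1)/α) := by
        intro i
        rw [Finset.sum_eq_single i]
        · simp [Matrix.one_apply]
        · intro j _ hji
          simp [Matrix.one_apply, Ne.symm hji]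
        · intro h
          exact absurd (Finset.mem_univ i) h
      rw [Finset.sum_congr rfl fun i _ => hdiag i]
      have hterm : ∀ i : Fin d, hW.isHermitian.eigenvalues i *
          (hW.isHermitian.eigenvalues i ^ α / T) ^ ((α - 1)/α)
          = hW.isHermitian.eigenvalues i ^ α * T ^ (-((α - 1)/α)) := by
        intro i
        set v : ℝ := hW.isHermitian.eigenvalues i with hv
        have hvpos : 0 < v := hwpos i
        rw [Real.div_rpow (Real.rpow_nonneg hvpos.le α) hTpos.le,
          ← Real.rpow_mul hvpos.le, Real.rpow_neg hTpos.le, div_eq_mul_inv]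
        have he : α * ((α - 1)/α) = α - 1 := by field_simp
        rw [he, ← mul_assoc]
        congr 1
        nth_rewrite 1 [← Real.rpow_one v]
        rw [← Real.rpow_add hvpos]
        congr 1
        ring
      rw [Finset.sum_congr rfl fun i _ => hterm i, ← Finset.sum_mul, ← hTdef]
      nth_rewrite 1 [← Real.rpow_one T]
      rw [← Real.rpow_add hTpos]
      congr 1
      field_simp
      ring
    have hub : ∀ σ : {τ : Matrix (Fin d) (Fin d) ℂ // τ.PosDef ∧ τ.trace = 1},
        T ^ (1/α) ≤ (W * mpow (σ : Matrix (Fin d) (Fin d) ℂ) ((α - 1)/α)).trace.re := by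
      rintro ⟨τ, hτpd, hτtr⟩
      have hτh : τ.IsHermitian := hτpd.isHermitian
      have htpos : ∀ j, 0 < hτh.eigenvalues j := hτpd.eigenvalues_pos
      have htsum : ∑ j, hτh.eigenvalues j = 1 := by
        have h2 : τ.trace = ((∑ j, hτh.eigenvalues j : ℝ) : ℂ) := by
          conv_lhs => rw [RevHolder.spectral hτh]
          rw [RevHolder.trace_conj_diag]
          push_cast
          rfl
        rw [hτtr] at h2
        exact_mod_cast h2.symm
      have hmp : mpow τ ((α - 1)/α) =
          (hτh.eigenvectorUnitary : Matrix (Fin d) (Fin d) ℂ) *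
          Matrix.diagonal (fun j => ((hτh.eigenvalues j ^ ((α - 1)/α) : ℝ) : ℂ)) *
          star (hτh.eigenvectorUnitary : Matrix (Fin d) (Fin d) ℂ) := by
        rw [mpow, matFun, dif_pos hτh]
      rw [hmp]
      nth_rewrite 1 [hWspec]
      rw [RevHolder.trace_pair, Complex.ofReal_re]
      have hMMH : (star (hW.isHermitian.eigenvectorUnitary : Matrix (Fin d) (Fin d) ℂ) *
          (hτh.eigenvectorUnitary : Matrix (Fin d) (Fin d) ℂ)) *
          (star (hW.isHermitian.eigenvectorUnitary : Matrix (Fin d) (Fin d) ℂ) *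
          (hτh.eigenvectorUnitary : Matrix (Fin d) (Fin d) ℂ))ᴴ = 1 := by
        rw [← Matrix.star_eq_conjTranspose, StarMul.star_mul, star_star]
        simp only [Matrix.mul_assoc, RevHolder.coe_mul_star_assoc, RevHolder.star_mul_coe,
          RevHolder.star_mul_coe_assoc, RevHolder.coe_mul_star]
      have hMHM : (star (hW.isHermitian.eigenvectorUnitary : Matrix (Fin d) (Fin d) ℂ) *
          (hτh.eigenvectorUnitary : Matrix (Fin d) (Fin d) ℂ))ᴴ *
          (star (hW.isHermitian.eigenvectorUnitary : Matrix (Fin d) (Fin d) ℂ) *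
          (hτh.eigenvectorUnitary : Matrix (Fin d) (Fin d) ℂ)) = 1 := by
        rw [← Matrix.star_eq_conjTranspose, StarMul.star_mul, star_star]
        simp only [Matrix.mul_assoc, RevHolder.coe_mul_star_assoc, RevHolder.star_mul_coe,
          RevHolder.star_mul_coe_assoc, RevHolder.coe_mul_star]
      rw [hTdef]
      exact RevHolder.sum_lower hα0 hα2 hwpos htpos htsum
        (fun i j => Complex.normSq_nonneg _)
        (fun i => RevHolder.row_sum_normSq hMMH i)
        (fun j => RevHolder.col_sum_normSq hMHM j)
        (by rw [← hTdef]; exact hTpos)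
    have hubf : ∀ σ : {τ : Matrix (Fin d) (Fin d) ℂ // τ.PosDef ∧ τ.trace = 1},
        -((W * mpow (σ : Matrix (Fin d) (Fin d) ℂ) ((α - 1)/α)).trace.re) ≤ -(T ^ (1/α)) :=
      fun σ => neg_le_neg (hub σ)
    have hne : Nonempty {τ : Matrix (Fin d) (Fin d) ℂ // τ.PosDef ∧ τ.trace = 1} :=
      ⟨⟨τ0, hτ0pd, hτ0tr⟩⟩
    apply le_antisymm
    · exact ciSup_le hubf
    · have hbdd : BddAbove (Set.range fun σ : {τ : Matrix (Fin d) (Fin d) ℂ //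
          τ.PosDef ∧ τ.trace = 1} =>
          -((W * mpow (σ : Matrix (Fin d) (Fin d) ℂ) ((α - 1)/α)).trace.re)) := by
        refine ⟨-(T ^ (1/α)), ?_⟩
        rintro x ⟨σ, rfl⟩
        exact hubf σ
      have hle := le_ciSup hbdd
        (⟨τ0, hτ0pd, hτ0tr⟩ : {τ : Matrix (Fin d) (Fin d) ℂ // τ.PosDef ∧ τ.trace = 1})
      rw [show -((W * mpow τ0 ((α - 1)/α)).trace.re) = -(T ^ (1/α)) by rw [hval]] at hle
      exact hle
end

section
/- For α ∈ (1,∞), positive definite X and Y on ℂ^d: sup over positive definite density operators τ of Tr{X^{1/2} Y^{(1−α)/α} X^{1/2} τ^{(α−1)/α}} = ‖X^{1/2} Y^{(1−α)/α} X^{1/2}‖_α = (Tr[(Y^{(1−α)/2α} X Y^{(1−α)/2α})^α])^{1/α}. -/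
open Matrix Kronecker BigOperators
open scoped Classical ComplexOrder

section AuxHolder

variable {n : Type} [Fintype n] [DecidableEq n]

lemma aux_spectral (A : Matrix n n ℂ) (hA : A.IsHermitian) :
    A = (hA.eigenvectorUnitary : Matrix n n ℂ) *
      Matrix.diagonal (fun i => ((hA.eigenvalues i : ℝ) : ℂ)) *
      (star (hA.eigenvectorUnitary : Matrix n n ℂ)) := by
  have h := hA.spectral_theorem
  rw [Unitary.conjStarAlgAut_apply] at h
  exact h

lemma aux_herm_conj (U : Matrix n n ℂ) (e : n → ℝ) :
    (U * Matrix.diagonal (fun i => ((e i : ℝ) : ℂ)) * star U).IsHermitian := by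
  have hd : (Matrix.diagonal (fun i => ((e i : ℝ) : ℂ))).IsHermitian := by
    apply Matrix.isHermitian_diagonal_iff.2
    intro i
    exact Complex.conj_ofReal _
  simpa [Matrix.star_eq_conjTranspose] using
    Matrix.isHermitian_mul_mul_conjTranspose U hd

/-- Well-definedness of the functional calculus. -/
lemma matFun_eq {f : ℝ → ℝ} {A U : Matrix n n ℂ}
    (hU : U ∈ Matrix.unitaryGroup n ℂ) (e : n → ℝ)
    (hAU : A = U * Matrix.diagonal (fun i => ((e i : ℝ) : ℂ)) * star U) :
    matFun f A = U * Matrix.diagonal (fun i => ((f (e i) : ℝ) : ℂ)) * star U := by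
  have hU1 : U * star U = 1 := (Matrix.mem_unitaryGroup_iff).1 hU
  have hU2 : star U * U = 1 := (Matrix.mem_unitaryGroup_iff').1 hU
  have hherm : A.IsHermitian := by rw [hAU]; exact aux_herm_conj U e
  set V : Matrix n n ℂ := (hherm.eigenvectorUnitary : Matrix n n ℂ) with hV
  have hV1 : V * star V = 1 := (Matrix.mem_unitaryGroup_iff).1 hherm.eigenvectorUnitary.2
  have hV2 : star V * V = 1 := (Matrix.mem_unitaryGroup_iff').1 hherm.eigenvectorUnitary.2
  set μ := hherm.eigenvalues with hμ
  have hspec : A = V * Matrix.diagonal (fun i => ((μ i : ℝ) : ℂ)) * star V :=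
    aux_spectral A hherm
  set S := star U * V with hS
  have hkey : Matrix.diagonal (fun i => ((e i : ℝ) : ℂ)) * S
      = S * Matrix.diagonal (fun i => ((μ i : ℝ) : ℂ)) := by
    have h1 : star U * A * V
        = Matrix.diagonal (fun i => ((e i : ℝ) : ℂ)) * S := by
      rw [hAU]
      calc star U * (U * Matrix.diagonal (fun i => ((e i : ℝ) : ℂ)) * star U) * V
          = (star U * U) * Matrix.diagonal (fun i => ((e i : ℝ) : ℂ)) * (star U * V) := by
            noncomm_ring
        _ = Matrix.diagonal (fun i => ((e i : ℝ) : ℂ)) * S := by rw [hU2, one_mul]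
    have h2 : star U * A * V
        = S * Matrix.diagonal (fun i => ((μ i : ℝ) : ℂ)) := by
      rw [hspec]
      calc star U * (V * Matrix.diagonal (fun i => ((μ i : ℝ) : ℂ)) * star V) * V
          = (star U * V) * Matrix.diagonal (fun i => ((μ i : ℝ) : ℂ)) * (star V * V) := by
            noncomm_ring
        _ = S * Matrix.diagonal (fun i => ((μ i : ℝ) : ℂ)) := by rw [hV2, mul_one]
    rw [← h1, h2]
  have hkeyf : Matrix.diagonal (fun i => ((f (e i) : ℝ) : ℂ)) * S
      = S * Matrix.diagonal (fun i => ((f (μ i) : ℝ) : ℂ)) := by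
    ext i j
    have h4 : ((e i : ℝ) : ℂ) * S i j = S i j * ((μ j : ℝ) : ℂ) := by
      have h5 := congrFun (congrFun hkey i) j
      simpa only [Matrix.diagonal_mul, Matrix.mul_diagonal] using h5
    simp only [Matrix.diagonal_mul, Matrix.mul_diagonal]
    by_cases hSij : S i j = 0
    · simp [hSij]
    · have heμ : e i = μ j := by
        have h6 : ((e i : ℝ) : ℂ) = ((μ j : ℝ) : ℂ) := by
          rw [mul_comm] at h4
          exact mul_left_cancel₀ hSij (by rw [← h4, mul_comm])
        exact_mod_cast h6
      rw [heμ, mul_comm]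
  have hSS : S * star S = 1 := by
    rw [hS]
    calc star U * V * star (star U * V) = star U * (V * star V) * U := by
          simp [Matrix.star_eq_conjTranspose, mul_assoc]
      _ = 1 := by rw [hV1, mul_one, hU2]
  have hVUS : V = U * S := by
    rw [hS, ← mul_assoc, hU1, one_mul]
  rw [matFun, dif_pos hherm, ← hV, ← hμ, hVUS]
  calc U * S * Matrix.diagonal (fun i => ((f (μ i) : ℝ) : ℂ)) * star (U * S)
      = U * (S * Matrix.diagonal (fun i => ((f (μ i) : ℝ) : ℂ)) * star S) * star U := by
        simp [Matrix.star_eq_conjTranspose, mul_assoc]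
    _ = U * (Matrix.diagonal (fun i => ((f (e i) : ℝ) : ℂ)) * (S * star S)) * star U := by
        rw [← hkeyf]; noncomm_ring
    _ = U * Matrix.diagonal (fun i => ((f (e i) : ℝ) : ℂ)) * star U := by
        rw [hSS, mul_one, mul_assoc]

/-- Conjugation `Bᴴ * M * B` with `B` invertible preserves positive definiteness. -/
lemma aux_posDef_conj {M B : Matrix n n ℂ} (hM : M.PosDef) (hB : IsUnit B) :
    (Bᴴ * M * B).PosDef := by
  exact hM.conjTranspose_mul_mul_same (Matrix.mulVec_injective_iff_isUnit.2 hB)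

lemma aux_posDef_UDU {U : Matrix n n ℂ} (hU : U ∈ Matrix.unitaryGroup n ℂ)
    {e : n → ℝ} (he : ∀ i, 0 < e i) :
    (U * Matrix.diagonal (fun i => ((e i : ℝ) : ℂ)) * star U).PosDef := by
  have hD : (Matrix.diagonal (fun i => ((e i : ℝ) : ℂ))).PosDef := by
    rw [Matrix.posDef_diagonal_iff]
    intro i
    exact_mod_cast he i
  have hUs : IsUnit (star U : Matrix n n ℂ) :=
    ⟨⟨star U, U, (Matrix.mem_unitaryGroup_iff').1 hU, (Matrix.mem_unitaryGroup_iff).1 hU⟩, rfl⟩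
  have := aux_posDef_conj (B := star U) hD hUs
  simpa [Matrix.star_eq_conjTranspose] using this

lemma aux_trace_UDU {U : Matrix n n ℂ} (hU : U ∈ Matrix.unitaryGroup n ℂ)
    (v : n → ℂ) :
    (U * Matrix.diagonal v * star U).trace = ∑ i, v i := by
  rw [Matrix.trace_mul_cycle, (Matrix.mem_unitaryGroup_iff').1 hU, one_mul,
    Matrix.trace_diagonal]

lemma aux_UDU_mul {U : Matrix n n ℂ} (hU : U ∈ Matrix.unitaryGroup n ℂ)
    (a b : n → ℂ) :
    (U * Matrix.diagonal a * star U) * (U * Matrix.diagonal b * star U)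
      = U * Matrix.diagonal (fun i => a i * b i) * star U := by
  have hU2 : star U * U = 1 := (Matrix.mem_unitaryGroup_iff').1 hU
  calc (U * Matrix.diagonal a * star U) * (U * Matrix.diagonal b * star U)
      = U * Matrix.diagonal a * (star U * U) * Matrix.diagonal b * star U := by
        noncomm_ring
    _ = U * (Matrix.diagonal a * Matrix.diagonal b) * star U := by
        rw [hU2]; noncomm_ring
    _ = U * Matrix.diagonal (fun i => a i * b i) * star U := by
        rw [Matrix.diagonal_mul_diagonal]

/-- `mpow` of a positive definite matrix, in terms of its spectral data. -/
lemma mpow_posDef_eq {A : Matrix n n ℂ} (hA : A.PosDef) (p : ℝ) :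
    mpow A p = (hA.1.eigenvectorUnitary : Matrix n n ℂ) *
      Matrix.diagonal (fun i => ((hA.1.eigenvalues i ^ p : ℝ) : ℂ)) *
      (star (hA.1.eigenvectorUnitary : Matrix n n ℂ)) :=
  matFun_eq hA.1.eigenvectorUnitary.2 hA.1.eigenvalues (aux_spectral A hA.1)

lemma mpow_eq_decomp {A U : Matrix n n ℂ} (hU : U ∈ Matrix.unitaryGroup n ℂ) (e : n → ℝ)
    (hAU : A = U * Matrix.diagonal (fun i => ((e i : ℝ) : ℂ)) * star U) (p : ℝ) :
    mpow A p = U * Matrix.diagonal (fun i => ((e i ^ p : ℝ) : ℂ)) * star U :=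
  matFun_eq hU e hAU

lemma mpow_posDef {A : Matrix n n ℂ} (hA : A.PosDef) (p : ℝ) :
    (mpow A p).PosDef := by
  rw [mpow_posDef_eq hA p]
  exact aux_posDef_UDU hA.1.eigenvectorUnitary.2
    (fun i => Real.rpow_pos_of_pos (hA.eigenvalues_pos i) p)

lemma mpow_herm {A : Matrix n n ℂ} (hA : A.PosDef) (p : ℝ) :
    star (mpow A p) = mpow A p := (mpow_posDef hA p).1

lemma mpow_mul_mpow {A : Matrix n n ℂ} (hA : A.PosDef) (p q : ℝ) :
    mpow A p * mpow A q = mpow A (p + q) := by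
  rw [mpow_posDef_eq hA p, mpow_posDef_eq hA q, mpow_posDef_eq hA (p+q),
    aux_UDU_mul hA.1.eigenvectorUnitary.2]
  have hfun : (fun i => ((hA.1.eigenvalues i ^ p : ℝ) : ℂ) * ((hA.1.eigenvalues i ^ q : ℝ) : ℂ))
      = (fun i => ((hA.1.eigenvalues i ^ (p + q) : ℝ) : ℂ)) := by
    funext i
    rw [← Complex.ofReal_mul, ← Real.rpow_add (hA.eigenvalues_pos i)]
  rw [hfun]

lemma mpow_one {A : Matrix n n ℂ} (hA : A.PosDef) : mpow A 1 = A := by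
  rw [mpow_posDef_eq hA 1]
  simp only [Real.rpow_one]
  exact (aux_spectral A hA.1).symm

lemma aux_sum_t {τ : Matrix n n ℂ} (hτ : τ.PosDef) (hτ1 : τ.trace = 1) :
    ∑ i, hτ.1.eigenvalues i = 1 := by
  have h := aux_spectral τ hτ.1
  have h2 : τ.trace = ∑ i, ((hτ.1.eigenvalues i : ℝ) : ℂ) := by
    conv_lhs => rw [h]
    exact aux_trace_UDU hτ.1.eigenvectorUnitary.2 _
  rw [hτ1] at h2
  have h3 : ((∑ i, hτ.1.eigenvalues i : ℝ) : ℂ) = 1 := by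
    push_cast
    exact h2.symm
  exact_mod_cast h3

lemma aux_upper {W τ : Matrix n n ℂ} (hW : W.PosDef) (hτ : τ.PosDef) (hτ1 : τ.trace = 1)
    {α : ℝ} (hα : 1 < α) :
    (W * mpow τ ((α - 1)/α)).trace.re ≤ (∑ i, hW.1.eigenvalues i ^ α) ^ (1/α) := by
  have hα0 : (0:ℝ) < α := lt_trans one_pos hα
  set p : ℝ := (α - 1)/α with hp
  set U : Matrix n n ℂ := (hW.1.eigenvectorUnitary : Matrix n n ℂ) with hU
  set V : Matrix n n ℂ := (hτ.1.eigenvectorUnitary : Matrix n n ℂ) with hV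
  set μ := hW.1.eigenvalues with hμ
  set t := hτ.1.eigenvalues with ht
  have hU1 : U * star U = 1 := (Matrix.mem_unitaryGroup_iff).1 hW.1.eigenvectorUnitary.2
  have hU2 : star U * U = 1 := (Matrix.mem_unitaryGroup_iff').1 hW.1.eigenvectorUnitary.2
  have hV1 : V * star V = 1 := (Matrix.mem_unitaryGroup_iff).1 hτ.1.eigenvectorUnitary.2
  have hV2 : star V * V = 1 := (Matrix.mem_unitaryGroup_iff').1 hτ.1.eigenvectorUnitary.2
  have hμpos : ∀ i, 0 < μ i := hW.eigenvalues_pos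
  have htpos : ∀ i, 0 < t i := hτ.eigenvalues_pos
  set s : n → ℝ := fun i => t i ^ p with hs
  have hσ : mpow τ p = V * Matrix.diagonal (fun i => ((s i : ℝ) : ℂ)) * star V :=
    mpow_posDef_eq hτ p
  set S : Matrix n n ℂ := star V * U with hSdef
  set M : Matrix n n ℂ := star V * W * V with hMdef
  have hM : M = S * Matrix.diagonal (fun i => ((μ i : ℝ) : ℂ)) * star S := by
    rw [hMdef, hSdef]
    conv_lhs => rw [aux_spectral W hW.1, ← hU, ← hμ]
    simp only [Matrix.star_eq_conjTranspose, Matrix.conjTranspose_mul,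
      Matrix.conjTranspose_conjTranspose, Matrix.mul_assoc]
  -- trace formula
  have h1 : (W * mpow τ p).trace = ∑ i, M i i * ((s i : ℝ) : ℂ) := by
    rw [hσ]
    have e1 : W * (V * Matrix.diagonal (fun i => ((s i : ℝ) : ℂ)) * star V)
        = (W * V * Matrix.diagonal (fun i => ((s i : ℝ) : ℂ))) * star V := by
      noncomm_ring
    rw [e1, Matrix.trace_mul_comm]
    have e2 : star V * (W * V * Matrix.diagonal (fun i => ((s i : ℝ) : ℂ)))
        = M * Matrix.diagonal (fun i => ((s i : ℝ) : ℂ)) := by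
      rw [hMdef]; noncomm_ring
    rw [e2, Matrix.trace]
    congr 1
    funext i
    simp [Matrix.diag, Matrix.mul_diagonal]
  set w : n → ℝ := fun i => (M i i).re with hw
  have h2 : (W * mpow τ p).trace.re = ∑ i, w i * s i := by
    rw [h1, Complex.re_sum]
    congr 1
    funext i
    simp [Complex.mul_re]
    exact Or.inl rfl
  set P : n → n → ℝ := fun i j => Complex.normSq (S i j) with hP
  have hPnn : ∀ i j, 0 ≤ P i j := fun i j => Complex.normSq_nonneg _
  have hMii : ∀ i, M i i = ∑ j, ((μ j * P i j : ℝ) : ℂ) := by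
    intro i
    rw [hM]
    rw [Matrix.mul_apply]
    congr 1
    funext j
    rw [Matrix.mul_diagonal]
    have : (star S) j i = (starRingEnd ℂ) (S i j) := by
      simp [Matrix.star_eq_conjTranspose, Matrix.conjTranspose_apply]
    rw [this]
    rw [mul_comm (S i j) _, mul_assoc, Complex.mul_conj]
    push_cast
    ring
  have hwP : ∀ i, w i = ∑ j, P i j * μ j := by
    intro i
    rw [hw]
    simp only [hMii i, Complex.re_sum, Complex.ofReal_re]
    congr 1
    funext j
    ring
  have hSS1 : S * star S = 1 := by
    rw [hSdef]
    calc star V * U * star (star V * U) = star V * (U * star U) * V := by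
          simp [Matrix.star_eq_conjTranspose, Matrix.mul_assoc]
      _ = 1 := by rw [hU1, mul_one, hV2]
  have hSS2 : star S * S = 1 := by
    rw [hSdef]
    calc star (star V * U) * (star V * U) = star U * (V * star V) * U := by
          simp [Matrix.star_eq_conjTranspose, Matrix.mul_assoc]
      _ = 1 := by rw [hV1, mul_one, hU2]
  have hProw : ∀ i, ∑ j, P i j = 1 := by
    intro i
    have h7 := congrFun (congrFun hSS1 i) i
    rw [Matrix.mul_apply] at h7
    have h3 : (∑ j, ((P i j : ℝ) : ℂ)) = 1 := by
      have e : ∀ j, ((P i j : ℝ) : ℂ) = S i j * star S j i := by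
        intro j
        have h8 : (star S) j i = (starRingEnd ℂ) (S i j) := by
          simp [Matrix.star_eq_conjTranspose, Matrix.conjTranspose_apply]
        rw [h8, Complex.mul_conj]
      calc ∑ j, ((P i j : ℝ) : ℂ) = ∑ j, S i j * star S j i := by simp only [e]
        _ = (1 : Matrix n n ℂ) i i := h7
        _ = 1 := Matrix.one_apply_eq i
    have h4 : ((∑ j, P i j : ℝ) : ℂ) = 1 := by push_cast; exact h3
    exact_mod_cast h4
  have hPcol : ∀ j, ∑ i, P i j = 1 := by
    intro j
    have h7 := congrFun (congrFun hSS2 j) j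
    rw [Matrix.mul_apply] at h7
    have h3 : (∑ i, ((P i j : ℝ) : ℂ)) = 1 := by
      have e : ∀ i, ((P i j : ℝ) : ℂ) = star S j i * S i j := by
        intro i
        have h8 : (star S) j i = (starRingEnd ℂ) (S i j) := by
          simp [Matrix.star_eq_conjTranspose, Matrix.conjTranspose_apply]
        rw [h8, mul_comm, Complex.mul_conj]
      calc ∑ i, ((P i j : ℝ) : ℂ) = ∑ i, star S j i * S i j := by simp only [e]
        _ = (1 : Matrix n n ℂ) j j := h7
        _ = 1 := Matrix.one_apply_eq j
    have h4 : ((∑ i, P i j : ℝ) : ℂ) = 1 := by push_cast; exact h3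
    exact_mod_cast h4
  have hwnn : ∀ i, 0 ≤ w i := by
    intro i
    rw [hwP i]
    exact Finset.sum_nonneg fun j _ => mul_nonneg (hPnn i j) (hμpos j).le
  have hsnn : ∀ i, 0 ≤ s i := fun i => (Real.rpow_pos_of_pos (htpos i) p).le
  -- Jensen
  have hJ : ∀ i, w i ^ α ≤ ∑ j, P i j * μ j ^ α := by
    intro i
    have := (convexOn_rpow hα.le).map_sum_le
      (t := Finset.univ) (w := fun j => P i j) (p := fun j => μ j)
      (fun j _ => hPnn i j) (by rw [hProw i]) (fun j _ => (hμpos j).le)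
    simp only [smul_eq_mul] at this
    rw [hwP i]
    exact this
  have hsum : ∑ i, w i ^ α ≤ ∑ j, μ j ^ α := by
    calc ∑ i, w i ^ α ≤ ∑ i, ∑ j, P i j * μ j ^ α := Finset.sum_le_sum fun i _ => hJ i
      _ = ∑ j, (∑ i, P i j) * μ j ^ α := by
          rw [Finset.sum_comm]
          congr 1
          funext j
          rw [Finset.sum_mul]
      _ = ∑ j, μ j ^ α := by
          congr 1
          funext j
          rw [hPcol j, one_mul]
  -- Hölder
  have hq : α.HolderConjugate (Real.conjExponent α) := Real.HolderConjugate.conjExponent hα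
  have hsq : ∑ i, s i ^ Real.conjExponent α = 1 := by
    have hpq1 : p * Real.conjExponent α = 1 := by
      have hne1 : α ≠ 0 := ne_of_gt hα0
      have hne2 : α - 1 ≠ 0 := sub_ne_zero.2 (ne_of_gt hα)
      rw [Real.conjExponent, hp]
      field_simp
    have : ∀ i, s i ^ Real.conjExponent α = t i := by
      intro i
      rw [hs]
      rw [← Real.rpow_mul (htpos i).le, hpq1, Real.rpow_one]
    simp only [this]
    exact aux_sum_t hτ hτ1
  have hH : ∑ i, w i * s i ≤ (∑ i, w i ^ α) ^ (1/α) * (∑ i, s i ^ Real.conjExponent α)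
      ^ (1/Real.conjExponent α) :=
    Real.inner_le_Lp_mul_Lq_of_nonneg Finset.univ hq (fun i _ => hwnn i) (fun i _ => hsnn i)
  rw [h2]
  calc ∑ i, w i * s i
      ≤ (∑ i, w i ^ α) ^ (1/α) * (∑ i, s i ^ Real.conjExponent α) ^ (1/Real.conjExponent α) := hH
    _ = (∑ i, w i ^ α) ^ (1/α) := by rw [hsq, Real.one_rpow, mul_one]
    _ ≤ (∑ i, μ i ^ α) ^ (1/α) := by
        apply Real.rpow_le_rpow (Finset.sum_nonneg fun i _ => Real.rpow_nonneg (hwnn i) α)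
          hsum (by positivity)

end AuxHolder

/-- Hölder variational formula for `α ∈ (1,∞)`:
`sup_{τ>0,Trτ=1} Tr{X^{1/2} Y^{(1−α)/α} X^{1/2} τ^{(α−1)/α}}
  = (Tr[(X^{1/2} Y^{(1−α)/α} X^{1/2})^α])^{1/α}
  = (Tr[(Y^{(1−α)/2α} X Y^{(1−α)/2α})^α])^{1/α}`. -/
theorem stmt_15 (d : ℕ) (α : ℝ) (hα : 1 < α)
    (X Y : Matrix (Fin d) (Fin d) ℂ) (hX : X.PosDef) (hY : Y.PosDef) :
    (⨆ τ : {τ : Matrix (Fin d) (Fin d) ℂ // τ.PosDef ∧ τ.trace = 1},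
        ((mpow X (1/2) * mpow Y ((1 - α)/α) * mpow X (1/2) *
            mpow (τ : Matrix (Fin d) (Fin d) ℂ) ((α - 1)/α)).trace.re)) =
      ((mpow (mpow X (1/2) * mpow Y ((1 - α)/α) * mpow X (1/2)) α).trace.re) ^ (1/α) ∧
    ((mpow (mpow X (1/2) * mpow Y ((1 - α)/α) * mpow X (1/2)) α).trace.re) ^ (1/α) =
      ((mpow (mpow Y ((1 - α)/(2*α)) * X * mpow Y ((1 - α)/(2*α))) α).trace.re) ^ (1/α) := by
  have hα0 : (0:ℝ) < α := lt_trans one_pos hα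
  have hαne : α ≠ 0 := ne_of_gt hα0
  set W : Matrix (Fin d) (Fin d) ℂ :=
    mpow X (1/2) * mpow Y ((1 - α)/α) * mpow X (1/2) with hWdef
  have hXh : (mpow X (1/2)).PosDef := mpow_posDef hX _
  have hYh : (mpow Y ((1 - α)/α)).PosDef := mpow_posDef hY _
  have hW : W.PosDef := by
    have h := aux_posDef_conj (B := mpow X (1/2)) hYh (mpow_posDef hX _).isUnit
    rw [show (mpow X (1/2))ᴴ = mpow X (1/2) from (mpow_posDef hX _).1] at h
    exact h
  set U : Matrix (Fin d) (Fin d) ℂ := (hW.1.eigenvectorUnitary : Matrix (Fin d) (Fin d) ℂ)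
    with hUdef
  have hU : U ∈ Matrix.unitaryGroup (Fin d) ℂ := hW.1.eigenvectorUnitary.2
  set μ := hW.1.eigenvalues with hμdef
  have hμpos : ∀ i, 0 < μ i := hW.eigenvalues_pos
  set c : ℝ := ∑ i, μ i ^ α with hcdef
  have hc : (mpow W α).trace.re = c := by
    rw [mpow_posDef_eq hW α, aux_trace_UDU hU, Complex.re_sum]
    simp
    rfl
  -- Part 2 (trace identity), proved first
  have hpart2 : (mpow W α).trace =
      (mpow (mpow Y ((1 - α)/(2*α)) * X * mpow Y ((1 - α)/(2*α))) α).trace := by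
    set qq : ℝ := (1 - α)/(2*α) with hqq
    set B : Matrix (Fin d) (Fin d) ℂ := mpow Y qq * mpow X (1/2) with hBdef
    have hBu : IsUnit B := ((mpow_posDef hY qq).isUnit).mul (mpow_posDef hX _).isUnit
    have hBH : Bᴴ = mpow X (1/2) * mpow Y qq := by
      rw [hBdef, Matrix.conjTranspose_mul,
        show (mpow X (1/2))ᴴ = mpow X (1/2) from (mpow_posDef hX _).1,
        show (mpow Y qq)ᴴ = mpow Y qq from (mpow_posDef hY _).1]
    have hBW : Bᴴ * B = W := by
      rw [hBH, hBdef, hWdef]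
      have : mpow X (1/2) * mpow Y qq * (mpow Y qq * mpow X (1/2))
          = mpow X (1/2) * (mpow Y qq * mpow Y qq) * mpow X (1/2) := by noncomm_ring
      have hqq2 : qq + qq = (1 - α)/α := by
        rw [hqq]
        field_simp
        ring
      rw [this, mpow_mul_mpow hY, hqq2]
    have hBBH : B * Bᴴ = mpow Y qq * X * mpow Y qq := by
      rw [hBH, hBdef]
      have : mpow Y qq * mpow X (1/2) * (mpow X (1/2) * mpow Y qq)
          = mpow Y qq * (mpow X (1/2) * mpow X (1/2)) * mpow Y qq := by noncomm_ring
      have hhalf : (1/2 : ℝ) + 1/2 = 1 := by norm_num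
      rw [this, mpow_mul_mpow hX, hhalf, mpow_one hX]
    -- the unitary C
    set D : Matrix (Fin d) (Fin d) ℂ :=
      Matrix.diagonal (fun i => ((μ i ^ (-(1:ℝ)/2) : ℝ) : ℂ)) with hDdef
    set C : Matrix (Fin d) (Fin d) ℂ := B * (U * D) with hCdef
    have hDD : D * D = Matrix.diagonal (fun i => (((μ i)⁻¹ : ℝ) : ℂ)) := by
      rw [hDdef, Matrix.diagonal_mul_diagonal]
      have hfun : (fun i => ((μ i ^ (-(1:ℝ)/2) : ℝ) : ℂ) * ((μ i ^ (-(1:ℝ)/2) : ℝ) : ℂ))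
          = fun i => (((μ i)⁻¹ : ℝ) : ℂ) := by
        funext i
        rw [← Complex.ofReal_mul, ← Real.rpow_add (hμpos i),
          show (-(1:ℝ)/2 + -(1:ℝ)/2) = -1 by norm_num, Real.rpow_neg_one]
      rw [hfun]
    have hDstar : star D = D := by
      rw [hDdef, Matrix.star_eq_conjTranspose, Matrix.diagonal_conjTranspose]
      have hst : star (fun i => ((μ i ^ (-(1:ℝ)/2) : ℝ) : ℂ))
          = fun i => ((μ i ^ (-(1:ℝ)/2) : ℝ) : ℂ) := by
        funext i
        simp [Pi.star_apply, Complex.conj_ofReal]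
      rw [hst]
    have hWinv : W * (U * Matrix.diagonal (fun i => (((μ i)⁻¹ : ℝ) : ℂ)) * star U) = 1 := by
      conv_lhs => rw [aux_spectral W hW.1, ← hUdef, ← hμdef]
      rw [aux_UDU_mul hU]
      have : (fun i => ((μ i : ℝ) : ℂ) * (((μ i)⁻¹ : ℝ) : ℂ)) = fun _ => (1 : ℂ) := by
        funext i
        rw [← Complex.ofReal_mul, mul_inv_cancel₀ (hμpos i).ne']
        norm_num
      rw [this, Matrix.diagonal_one, mul_one]
      exact (Matrix.mem_unitaryGroup_iff).1 hU
    have hNinv : W⁻¹ = U * Matrix.diagonal (fun i => (((μ i)⁻¹ : ℝ) : ℂ)) * star U :=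
      Matrix.inv_eq_right_inv hWinv
    have hCC : C * star C = 1 := by
      rw [hCdef]
      have hstar : star (B * (U * D)) = star D * star U * Bᴴ := by
        simp [Matrix.star_eq_conjTranspose, Matrix.mul_assoc]
      rw [hstar, hDstar]
      have e1 : B * (U * D) * (D * star U * Bᴴ)
          = B * (U * (D * D) * star U) * Bᴴ := by noncomm_ring
      rw [e1, hDD, ← hNinv, hBW.symm, Matrix.mul_inv_rev]
      have hdetB : IsUnit B.det := (Matrix.isUnit_iff_isUnit_det B).1 hBu
      have hdetBH : IsUnit (Bᴴ).det := by
        rw [Matrix.det_conjTranspose]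
        exact hdetB.star
      calc B * (B⁻¹ * Bᴴ⁻¹) * Bᴴ = (B * B⁻¹) * (Bᴴ⁻¹ * Bᴴ) := by noncomm_ring
        _ = 1 := by rw [Matrix.mul_nonsing_inv B hdetB, Matrix.nonsing_inv_mul _ hdetBH, one_mul]
    have hCU : C ∈ Matrix.unitaryGroup (Fin d) ℂ := (Matrix.mem_unitaryGroup_iff).2 hCC
    have hdecomp : mpow Y qq * X * mpow Y qq
        = C * Matrix.diagonal (fun i => ((μ i : ℝ) : ℂ)) * star C := by
      rw [← hBBH, hCdef]
      have hstar : star (B * (U * D)) = star D * star U * Bᴴ := by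
        simp [Matrix.star_eq_conjTranspose, Matrix.mul_assoc]
      rw [hstar, hDstar]
      have e1 : B * (U * D) * Matrix.diagonal (fun i => ((μ i : ℝ) : ℂ)) * (D * star U * Bᴴ)
          = B * (U * (D * Matrix.diagonal (fun i => ((μ i : ℝ) : ℂ)) * D) * star U) * Bᴴ := by
        noncomm_ring
      rw [e1, hDdef, Matrix.diagonal_mul_diagonal, Matrix.diagonal_mul_diagonal]
      have : (fun i => ((μ i ^ (-(1:ℝ)/2) : ℝ) : ℂ) * ((μ i : ℝ) : ℂ) * ((μ i ^ (-(1:ℝ)/2) : ℝ) : ℂ))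
          = fun _ => (1 : ℂ) := by
        funext i
        rw [← Complex.ofReal_mul, ← Complex.ofReal_mul]
        have hsc : μ i ^ (-(1:ℝ)/2) * μ i * μ i ^ (-(1:ℝ)/2) = 1 := by
          nth_rewrite 2 [← Real.rpow_one (μ i)]
          rw [← Real.rpow_add (hμpos i), ← Real.rpow_add (hμpos i),
            show (-(1:ℝ)/2 + 1 + -(1:ℝ)/2) = 0 by norm_num, Real.rpow_zero]
        rw [hsc, Complex.ofReal_one]
      rw [this, Matrix.diagonal_one, mul_one, (Matrix.mem_unitaryGroup_iff).1 hU, mul_one]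
    rw [mpow_eq_decomp hCU μ hdecomp α, aux_trace_UDU hCU, mpow_posDef_eq hW α,
      aux_trace_UDU hU]
  rcases Nat.eq_zero_or_pos d with hd | hd
  · subst hd
    have hempty : IsEmpty {τ : Matrix (Fin 0) (Fin 0) ℂ // τ.PosDef ∧ τ.trace = 1} := by
      constructor
      rintro ⟨τ, hτ, hτ1⟩
      have : τ.trace = 0 := by simp [Matrix.trace]
      rw [this] at hτ1
      exact zero_ne_one hτ1
    haveI := hempty
    constructor
    · rw [Real.iSup_of_isEmpty]
      have h9 : (mpow W α).trace = 0 := by simp [Matrix.trace]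
      rw [h9, Complex.zero_re, Real.zero_rpow (one_div_ne_zero hαne)]
    · rw [hpart2]
  · have hne : Nonempty (Fin d) := ⟨⟨0, hd⟩⟩
    have hcpos : 0 < c := Finset.sum_pos (fun i _ => Real.rpow_pos_of_pos (hμpos i) α)
      Finset.univ_nonempty
    set pp : ℝ := (α - 1)/α with hpp
    set e : Fin d → ℝ := fun i => c⁻¹ * μ i ^ α with hedef
    have hepos : ∀ i, 0 < e i := fun i => by
      rw [hedef]
      exact mul_pos (inv_pos.2 hcpos) (Real.rpow_pos_of_pos (hμpos i) α)
    set τ₀ : Matrix (Fin d) (Fin d) ℂ :=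
      U * Matrix.diagonal (fun i => ((e i : ℝ) : ℂ)) * star U with hτ₀def
    have hτ₀pd : τ₀.PosDef := aux_posDef_UDU hU hepos
    have hτ₀tr : τ₀.trace = 1 := by
      rw [hτ₀def, aux_trace_UDU hU]
      have : ∑ i, e i = 1 := by
        rw [hedef, ← Finset.mul_sum, ← hcdef, inv_mul_cancel₀ hcpos.ne']
      rw [← Complex.ofReal_sum]
      rw [this]
      norm_num
    have hval : (W * mpow τ₀ pp).trace.re = c ^ (1/α) := by
      rw [mpow_eq_decomp hU e hτ₀def pp]
      conv_lhs => rw [aux_spectral W hW.1, ← hUdef, ← hμdef]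
      rw [aux_UDU_mul hU, aux_trace_UDU hU, Complex.re_sum]
      have hterm : ∀ i, (((μ i : ℝ) : ℂ) * ((e i ^ pp : ℝ) : ℂ)).re
          = c ^ (-pp) * μ i ^ α := by
        intro i
        rw [← Complex.ofReal_mul, Complex.ofReal_re]
        rw [hedef]
        rw [Real.mul_rpow (inv_pos.2 hcpos).le (Real.rpow_pos_of_pos (hμpos i) α).le,
          Real.inv_rpow hcpos.le, ← Real.rpow_neg hcpos.le,
          ← Real.rpow_mul (hμpos i).le]
        have hαpp : α * pp = α - 1 := by
          rw [hpp]
          field_simp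
        have hμexp : μ i * μ i ^ (α * pp) = μ i ^ α := by
          rw [hαpp]
          nth_rewrite 1 [← Real.rpow_one (μ i)]
          rw [← Real.rpow_add (hμpos i), show (1 + (α - 1)) = α by ring]
        calc μ i * (c ^ (-pp) * μ i ^ (α * pp))
            = c ^ (-pp) * (μ i * μ i ^ (α * pp)) := by ring
          _ = c ^ (-pp) * μ i ^ α := by rw [hμexp]
      simp only [hterm]
      rw [← Finset.mul_sum, ← hcdef, ← Real.rpow_add_one hcpos.ne',
        show -pp + 1 = 1/α from by rw [hpp]; field_simp; ring]
    have hub : ∀ τ : {τ : Matrix (Fin d) (Fin d) ℂ // τ.PosDef ∧ τ.trace = 1},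
        (W * mpow (τ : Matrix (Fin d) (Fin d) ℂ) pp).trace.re ≤ c ^ (1/α) := by
      rintro ⟨τ, hτpd, hτ1⟩
      exact aux_upper hW hτpd hτ1 hα
    haveI : Nonempty {τ : Matrix (Fin d) (Fin d) ℂ // τ.PosDef ∧ τ.trace = 1} :=
      ⟨⟨τ₀, hτ₀pd, hτ₀tr⟩⟩
    constructor
    · rw [hc]
      apply le_antisymm
      · exact ciSup_le hub
      · calc c ^ (1/α) = (W * mpow τ₀ pp).trace.re := hval.symm
          _ ≤ ⨆ τ : {τ : Matrix (Fin d) (Fin d) ℂ // τ.PosDef ∧ τ.trace = 1},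
              (W * mpow (τ : Matrix (Fin d) (Fin d) ℂ) pp).trace.re := by
            apply le_ciSup (f := fun τ : {τ : Matrix (Fin d) (Fin d) ℂ // τ.PosDef ∧ τ.trace = 1}
              => (W * mpow (τ : Matrix (Fin d) (Fin d) ℂ) pp).trace.re)
              ⟨c ^ (1/α), by rintro x ⟨τ, rfl⟩; exact hub τ⟩ ⟨τ₀, hτ₀pd, hτ₀tr⟩
    · rw [hpart2]
end

section
/- Let X = ∑_z λ_z |z⟩⟨z| and Y = ∑_z μ_z |z⟩⟨z| be commuting positive semi-definite operators with common eigenbasis, Y positive definite, let f be operator anti-monotone on (0,∞) (so x ↦ f(1/x) is concave on (0,∞)), and let τ = ∑_t ν_t |φ_t⟩⟨φ_t| be a positive definite density operator. Then ∑_{z,t} f(μ_z/ν_t) λ_z |⟨z|φ_t⟩|² ≤ ∑_z λ_z f(μ_z/τ_z), where τ_z = ⟨z|τ|z⟩. -/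
open Matrix Kronecker BigOperators
open scoped Classical ComplexOrder

set_option linter.unusedSectionVars false

set_option maxHeartbeats 1000000

namespace S18

variable {n : Type} [Fintype n] [DecidableEq n]

lemma dot_single (A : Matrix n n ℂ) (z : n) :
    star (Pi.single z 1 : n → ℂ) ⬝ᵥ (A *ᵥ Pi.single z 1) = A z z := by
  simp [dotProduct, mulVec, Pi.single_apply, apply_ite, Finset.sum_ite_eq']

lemma psd_vecMulVec (v : n → ℂ) : (vecMulVec v (star v)).PosSemidef := by
  refine PosSemidef.of_dotProduct_mulVec_nonneg ?_ ?_
  · ext i j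
    simp [vecMulVec, conjTranspose_apply, mul_comm]
  · intro x
    have : star x ⬝ᵥ (vecMulVec v (star v) *ᵥ x) = star (star v ⬝ᵥ x) * (star v ⬝ᵥ x) := by
      simp only [vecMulVec, dotProduct, mulVec, of_apply, Pi.star_apply, star_sum, star_mul',
        star_star, Finset.mul_sum, Finset.sum_mul]
      rw [Finset.sum_comm]
      apply Finset.sum_congr rfl; intro i _
      apply Finset.sum_congr rfl; intro j _
      ring
    rw [this]
    exact star_mul_self_nonneg _

lemma posDef_conj (U : Matrix n n ℂ) (hU : star U * U = 1) {D : Matrix n n ℂ}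
    (hD : D.PosDef) : (U * D * star U).PosDef := by
  have hUU : U * star U = 1 := mul_eq_one_comm.mp hU
  refine PosDef.of_dotProduct_mulVec_pos ?_ ?_
  · have h1 : (U * D * star U)ᴴ = U * Dᴴ * star U := by
      simp only [conjTranspose_mul, conjTranspose_conjTranspose, star_eq_conjTranspose,
        Matrix.mul_assoc]
    rw [IsHermitian, h1, hD.1.eq]
  · intro x hx
    have key : star x ⬝ᵥ ((U * D * star U) *ᵥ x)
        = star (star U *ᵥ x) ⬝ᵥ (D *ᵥ (star U *ᵥ x)) := by
      simp only [← mulVec_mulVec, star_mulVec, dotProduct_mulVec, star_eq_conjTranspose,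
        conjTranspose_conjTranspose, vecMul_vecMul]
    rw [key]
    apply hD.dotProduct_mulVec_pos
    intro h0
    apply hx
    have : U *ᵥ (star U *ᵥ x) = x := by rw [mulVec_mulVec, hUU, one_mulVec]
    rw [← this, h0, mulVec_zero]

variable {n : Type} [Fintype n] [DecidableEq n]

lemma herm_conj (U : Matrix n n ℂ) (a : n → ℝ) :
    (U * diagonal (fun i => (a i : ℂ)) * star U).IsHermitian := by
  have : (diagonal (fun i => (a i : ℂ)))ᴴ = diagonal (fun i => (a i : ℂ)) := by
    have hsf : (star fun i => ((a i : ℝ) : ℂ)) = fun i => ((a i : ℝ) : ℂ) := by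
      funext i
      simp [Complex.conj_ofReal]
    rw [diagonal_conjTranspose, hsf]
  rw [IsHermitian, star_eq_conjTranspose, conjTranspose_mul, conjTranspose_mul,
    conjTranspose_conjTranspose, this, Matrix.mul_assoc]

lemma matFun_conj (U : Matrix n n ℂ) (hU : star U * U = 1) (a : n → ℝ) (f : ℝ → ℝ) :
    matFun f (U * diagonal (fun i => (a i : ℂ)) * star U)
      = U * diagonal (fun i => (f (a i) : ℂ)) * star U := by
  have hUU : U * star U = 1 := mul_eq_one_comm.mp hU
  set M := U * diagonal (fun i => (a i : ℂ)) * star U with hMdef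
  have hM : M.IsHermitian := herm_conj U a
  rw [matFun, dif_pos hM]
  set V := (hM.eigenvectorUnitary : Matrix n n ℂ) with hVdef
  have hVV : V * star V = 1 := mem_unitaryGroup_iff.mp hM.eigenvectorUnitary.2
  have hsVV : star V * V = 1 := mul_eq_one_comm.mp hVV
  have spec : M = V * diagonal (RCLike.ofReal ∘ hM.eigenvalues) * star V :=
    hM.spectral_theorem
  set W := star V * U with hWdef
  have hMU : M * U = U * diagonal (fun i => (a i : ℂ)) := by
    rw [hMdef, Matrix.mul_assoc, hU, mul_one]
  have hVM : star V * M = diagonal (RCLike.ofReal ∘ hM.eigenvalues) * star V := by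
    conv_lhs => rw [spec]
    rw [← Matrix.mul_assoc, ← Matrix.mul_assoc, hsVV, one_mul]
  have hW : W * diagonal (fun i => (a i : ℂ))
      = diagonal (RCLike.ofReal ∘ hM.eigenvalues) * W := by
    rw [hWdef, Matrix.mul_assoc, ← hMU, ← Matrix.mul_assoc, hVM, Matrix.mul_assoc]
  have hWf : W * diagonal (fun i => (f (a i) : ℂ))
      = diagonal (fun i => (f (hM.eigenvalues i) : ℂ)) * W := by
    ext i j
    have h1 : W i j * (a j : ℂ) = (hM.eigenvalues i : ℂ) * W i j := by
      have := congrFun (congrFun hW i) j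
      simpa [mul_diagonal, diagonal_mul] using this
    rw [mul_diagonal, diagonal_mul]
    rcases eq_or_ne (W i j) 0 with h0 | h0
    · simp [h0]
    · have : (a j : ℂ) = (hM.eigenvalues i : ℂ) := by
        have := h1
        rw [mul_comm ((hM.eigenvalues i : ℂ)) (W i j)] at this
        exact mul_left_cancel₀ h0 this
      have ha : a j = hM.eigenvalues i := by exact_mod_cast this
      rw [ha, mul_comm]
  have hWW : W * star W = 1 := by
    have : W * star W = star V * (U * star U) * V := by
      rw [hWdef, Matrix.star_mul, star_star, Matrix.mul_assoc, Matrix.mul_assoc,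
        Matrix.mul_assoc]
    rw [this, hUU, mul_one, hsVV]
  have hUVW : V * W = U := by
    rw [hWdef, ← Matrix.mul_assoc, hVV, one_mul]
  have hdiagfun : diagonal (RCLike.ofReal ∘ hM.eigenvalues) = diagonal (fun i => ((hM.eigenvalues i : ℝ) : ℂ)) := rfl
  have e1 : U * diagonal (fun i => (f (a i) : ℂ)) * star U
      = V * (W * diagonal (fun i => (f (a i) : ℂ)) * star W) * star V := by
    rw [← hUVW, Matrix.star_mul]
    simp only [Matrix.mul_assoc]
  have e2 : W * diagonal (fun i => (f (a i) : ℂ)) * star W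
      = diagonal (fun i => (f (hM.eigenvalues i) : ℂ)) := by
    rw [hWf, Matrix.mul_assoc, hWW, mul_one]
  rw [e1, e2]


variable {n : Type} [Fintype n] [DecidableEq n]

lemma matFun_entry_eigen (N : Matrix n n ℂ) (hN : N.IsHermitian) (f : ℝ → ℝ) (z : n) (y : ℝ)
    (he : N *ᵥ Pi.single z 1 = (y : ℂ) • (Pi.single z 1 : n → ℂ)) :
    (matFun f N) z z = (f y : ℂ) := by
  rw [matFun, dif_pos hN]
  set V := (hN.eigenvectorUnitary : Matrix n n ℂ) with hVdef
  have hVV : V * star V = 1 := mem_unitaryGroup_iff.mp hN.eigenvectorUnitary.2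
  have hsVV : star V * V = 1 := mul_eq_one_comm.mp hVV
  have spec : N = V * diagonal (RCLike.ofReal ∘ hN.eigenvalues) * star V :=
    hN.spectral_theorem
  set c : n → ℂ := star V *ᵥ Pi.single z 1 with hcdef
  have hVN : star V * N = diagonal (RCLike.ofReal ∘ hN.eigenvalues) * star V := by
    conv_lhs => rw [spec]
    rw [← Matrix.mul_assoc, ← Matrix.mul_assoc, hsVV, one_mul]
  have hkey : ∀ j, (hN.eigenvalues j : ℂ) * c j = (y : ℂ) * c j := by
    intro j
    have h1 : star V *ᵥ (N *ᵥ Pi.single z 1)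
        = diagonal (RCLike.ofReal ∘ hN.eigenvalues) *ᵥ c := by
      rw [hcdef, mulVec_mulVec, mulVec_mulVec, hVN]
    have h2 : star V *ᵥ (N *ᵥ Pi.single z 1) = (y : ℂ) • c := by
      rw [he, mulVec_smul]
    have := h1.symm.trans h2
    have hj := congrFun this j
    simpa [mulVec_diagonal] using hj
  have hcj : ∀ j, c j = star (V z j) := by
    intro j
    simp [hcdef, mulVec, dotProduct, Pi.single_apply, apply_ite, Finset.sum_ite_eq']
  have hterm : ∀ j, V z j * (f (hN.eigenvalues j) : ℂ) * star (V z j)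
      = (f y : ℂ) * (V z j * star (V z j)) := by
    intro j
    rcases eq_or_ne (V z j) 0 with h0 | h0
    · simp [h0]
    · have hcj0 : c j ≠ 0 := by rw [hcj j]; exact star_ne_zero.mpr h0
      have : (hN.eigenvalues j : ℂ) = (y : ℂ) := by
        have := hkey j
        exact mul_right_cancel₀ hcj0 this
      have : hN.eigenvalues j = y := by exact_mod_cast this
      rw [this]; ring
  have hentry : (V * diagonal (fun i => (f (hN.eigenvalues i) : ℂ)) * star V) z z
      = ∑ j, V z j * (f (hN.eigenvalues j) : ℂ) * star (V z j) := by
    rw [Matrix.mul_apply]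
    apply Finset.sum_congr rfl
    intro j _
    rw [mul_diagonal]
    rfl
  have hsum1 : ∑ j, V z j * star (V z j) = 1 := by
    have := congrFun (congrFun hVV z) z
    rw [Matrix.mul_apply] at this
    simp only [star_eq_conjTranspose, conjTranspose_apply] at this
    rw [this, one_apply_eq]
  rw [hentry]
  calc ∑ j, V z j * (f (hN.eigenvalues j) : ℂ) * star (V z j)
      = ∑ j, (f y : ℂ) * (V z j * star (V z j)) := Finset.sum_congr rfl fun j _ => hterm j
    _ = (f y : ℂ) * ∑ j, V z j * star (V z j) := by rw [Finset.mul_sum]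
    _ = (f y : ℂ) := by rw [hsum1, mul_one]

variable {n : Type} [Fintype n] [DecidableEq n]

lemma term_cast (w : ℂ) (g : ℝ) : w * (g : ℂ) * star w = ((g * ‖w‖ ^ 2 : ℝ) : ℂ) := by
  have h1 : w * (g : ℂ) * star w = (g : ℂ) * (w * star w) := by ring
  rw [h1]
  have : w * star w = ((‖w‖ ^ 2 : ℝ) : ℂ) := by
    rw [Complex.star_def, Complex.mul_conj, Complex.normSq_eq_norm_sq]
  rw [this]
  push_cast; ring

lemma conj_entry (U : Matrix n n ℂ) (g : n → ℝ) (z : n) :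
    (U * diagonal (fun t => (g t : ℂ)) * star U) z z = ((∑ t, g t * ‖U z t‖ ^ 2 : ℝ) : ℂ) := by
  rw [Matrix.mul_apply]
  push_cast
  apply Finset.sum_congr rfl
  intro t _
  rw [mul_diagonal]
  have : (star U) t z = star (U z t) := rfl
  rw [this]
  have := term_cast (U z t) (g t)
  push_cast at this ⊢
  exact this

lemma self_dot (q : n → ℂ) : star q ⬝ᵥ q = ((∑ i, ‖q i‖ ^ 2 : ℝ) : ℂ) := by
  simp only [dotProduct, Pi.star_apply]
  push_cast
  apply Finset.sum_congr rfl
  intro i _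
  rw [Complex.star_def, mul_comm, Complex.mul_conj, Complex.normSq_eq_norm_sq]
  push_cast; ring

lemma dot_single_left (w : n → ℂ) (z : n) :
    star w ⬝ᵥ (Pi.single z 1 : n → ℂ) = star (w z) := by
  simp [dotProduct, Pi.single_apply, apply_ite, Finset.sum_ite_eq']

lemma vmv_mulVec (v w x : n → ℂ) : vecMulVec v w *ᵥ x = (w ⬝ᵥ x) • v := by
  funext i
  simp only [vecMulVec, mulVec, dotProduct, of_apply, Pi.smul_apply, smul_eq_mul,
    Finset.sum_mul, Finset.mul_sum]
  apply Finset.sum_congr rfl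
  intro j _
  ring

lemma rowsum (U : Matrix n n ℂ) (hUU : U * star U = 1) (z : n) :
    ∑ t, ‖U z t‖ ^ 2 = 1 := by
  have h := congrFun (congrFun hUU z) z
  rw [Matrix.mul_apply] at h
  have h2 : ∑ t, U z t * star (U z t) = 1 := by
    rw [one_apply_eq] at h
    rw [← h]
    rfl
  have h3 : ((∑ t, (1 : ℝ) * ‖U z t‖ ^ 2 : ℝ) : ℂ) = 1 := by
    rw [← h2]
    push_cast
    apply Finset.sum_congr rfl
    intro t _
    have := term_cast (U z t) 1
    push_cast at this ⊢
    rw [← this]; ring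
  have h4 : (∑ t, (1 : ℝ) * ‖U z t‖ ^ 2 : ℝ) = 1 := by exact_mod_cast h3
  rw [← h4]
  apply Finset.sum_congr rfl; intro t _; ring

lemma herm_dot (A B : Matrix n n ℂ) (hA : A.IsHermitian) (z : n) :
    star (A *ᵥ (Pi.single z 1 : n → ℂ)) ⬝ᵥ (B *ᵥ (Pi.single z 1 : n → ℂ)) = (A * B) z z := by
  rw [star_mulVec, hA.eq, ← dotProduct_mulVec, mulVec_mulVec]
  have : star (Pi.single z 1 : n → ℂ) ⬝ᵥ ((A * B) *ᵥ Pi.single z 1) = (A * B) z z := by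
    simp [dotProduct, mulVec, Pi.single_apply, apply_ite, Finset.sum_ite_eq']
  exact this

lemma cs (p q : n → ℂ) :
    ‖star p ⬝ᵥ q‖ ^ 2 ≤ (∑ i, ‖p i‖ ^ 2) * (∑ i, ‖q i‖ ^ 2) := by
  let P : EuclideanSpace ℂ n := (WithLp.equiv 2 _).symm p
  let Q : EuclideanSpace ℂ n := (WithLp.equiv 2 _).symm q
  have hin : (inner ℂ P Q) = star p ⬝ᵥ q := by
    simp [PiLp.inner_apply, dotProduct, RCLike.inner_apply, P, Q, mul_comm]
  have hP : ‖P‖ ^ 2 = ∑ i, ‖p i‖ ^ 2 := by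
    rw [EuclideanSpace.norm_eq, Real.sq_sqrt (by positivity)]
    rfl
  have hQ : ‖Q‖ ^ 2 = ∑ i, ‖q i‖ ^ 2 := by
    rw [EuclideanSpace.norm_eq, Real.sq_sqrt (by positivity)]
    rfl
  have := norm_inner_le_norm (𝕜 := ℂ) P Q
  have h2 : ‖(inner ℂ P Q)‖ ^ 2 ≤ (‖P‖ * ‖Q‖) ^ 2 := by
    apply pow_le_pow_left₀ (norm_nonneg _) this
  rw [hin] at h2
  rw [mul_pow, hP, hQ] at h2
  exact h2

set_option linter.unusedSectionVars false

lemma vmv_dot (w x : n → ℂ) :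
    star x ⬝ᵥ (vecMulVec w (star w) *ᵥ x) = star (star w ⬝ᵥ x) * (star w ⬝ᵥ x) := by
  rw [vmv_mulVec, dotProduct_smul, smul_eq_mul]
  have h1 : star x ⬝ᵥ w = star (star w ⬝ᵥ x) := by
    simp only [dotProduct, star_sum, star_mul', Pi.star_apply, star_star]
    apply Finset.sum_congr rfl
    intro i _
    ring
  rw [h1]
  ring

lemma psd_smul {A : Matrix n n ℂ} (hA : A.PosSemidef) (c : ℝ) (hc : 0 ≤ c) :
    (((c : ℝ) : ℂ) • A).PosSemidef := by
  refine PosSemidef.of_dotProduct_mulVec_nonneg ?_ ?_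
  · rw [IsHermitian, conjTranspose_smul, hA.1.eq, Complex.star_def, Complex.conj_ofReal]
  · intro x
    rw [smul_mulVec, dotProduct_smul, smul_eq_mul]
    exact mul_nonneg (Complex.zero_le_real.mpr hc) (hA.dotProduct_mulVec_nonneg x)

lemma prod_conj (U : Matrix n n ℂ) (hU : star U * U = 1) (g h : n → ℝ) :
    (U * diagonal (fun t => ((g t : ℝ) : ℂ)) * star U) *
      (U * diagonal (fun t => ((h t : ℝ) : ℂ)) * star U)
      = U * diagonal (fun t => ((g t * h t : ℝ) : ℂ)) * star U := by
  have key : diagonal (fun t => ((g t : ℝ) : ℂ)) * diagonal (fun t => ((h t : ℝ) : ℂ))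
      = diagonal (fun t => ((g t * h t : ℝ) : ℂ)) := by
    rw [diagonal_mul_diagonal]
    congr 1
    funext t
    push_cast
    ring
  calc (U * diagonal (fun t => ((g t : ℝ) : ℂ)) * star U) *
      (U * diagonal (fun t => ((h t : ℝ) : ℂ)) * star U)
      = U * diagonal (fun t => ((g t : ℝ) : ℂ)) *
        ((star U * U) * (diagonal (fun t => ((h t : ℝ) : ℂ)) * star U)) := by
        simp only [Matrix.mul_assoc]
    _ = U * diagonal (fun t => ((g t : ℝ) : ℂ)) *
        (diagonal (fun t => ((h t : ℝ) : ℂ)) * star U) := by rw [hU, one_mul]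
    _ = U * (diagonal (fun t => ((g t : ℝ) : ℂ)) *
        diagonal (fun t => ((h t : ℝ) : ℂ))) * star U := by simp only [Matrix.mul_assoc]
    _ = U * diagonal (fun t => ((g t * h t : ℝ) : ℂ)) * star U := by rw [key]

lemma entry_le {A B : Matrix n n ℂ} {x y : ℝ} (z : n) (hpsd : (A - B).PosSemidef)
    (hA : A z z = (x : ℂ)) (hB : B z z = (y : ℂ)) : y ≤ x := by
  have h := hpsd.dotProduct_mulVec_nonneg (Pi.single z 1)
  rw [dot_single (A - B) z] at h
  rw [Matrix.sub_apply, hA, hB] at h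
  have h2 : (0 : ℂ) ≤ ((x - y : ℝ) : ℂ) := by push_cast; exact h
  rw [Complex.zero_le_real] at h2
  linarith

lemma core (f : ℝ → ℝ)
    (hf : ∀ (m : Type) [Fintype m] [DecidableEq m] (A B : Matrix m m ℂ),
      A.PosDef → B.PosDef → (B - A).PosSemidef → (matFun f A - matFun f B).PosSemidef)
    (U : Matrix n n ℂ) (hU : star U * U = 1) (a : n → ℝ) (ha : ∀ t, 0 < a t) (z : n) :
    (∀ s : ℝ, 0 < s →
      f ((∑ t, a t * ‖U z t‖ ^ 2) + s) ≤ ∑ t, f (a t) * ‖U z t‖ ^ 2) ∧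
    (∀ y : ℝ, 0 < y → (∑ t, (a t)⁻¹ * ‖U z t‖ ^ 2) * y < 1 →
      ∑ t, f (a t) * ‖U z t‖ ^ 2 ≤ f y) := by
  have hUU : U * star U = 1 := mul_eq_one_comm.mp hU
  set e : n → ℂ := Pi.single z 1 with he_def
  set m : ℝ := ∑ t, a t * ‖U z t‖ ^ 2 with hm_def
  set α : ℝ := ∑ t, (a t)⁻¹ * ‖U z t‖ ^ 2 with hal_def
  set M : Matrix n n ℂ := U * diagonal (fun t => ((a t : ℝ) : ℂ)) * star U with hM_def
  have hMherm : M.IsHermitian := herm_conj U a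
  have hMpd : M.PosDef := posDef_conj U hU (Matrix.PosDef.diagonal fun i =>
    Complex.zero_lt_real.mpr (ha i))
  have hMzz : M z z = (m : ℂ) := conj_entry U a z
  have hMez : (M *ᵥ e) z = M z z := by
    simp [he_def, mulVec, dotProduct, Pi.single_apply, apply_ite, Finset.sum_ite_eq']
  set u : n → ℂ := M *ᵥ e - (m : ℂ) • e with hu_def
  have huz : u z = 0 := by
    simp only [hu_def, Pi.sub_apply, Pi.smul_apply, hMez, hMzz, he_def, Pi.single_eq_same,
      smul_eq_mul, mul_one, sub_self]
    exact sub_eq_zero.mpr (hMez.trans hMzz)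
  have hMe : M *ᵥ e = (m : ℂ) • e + u := by rw [hu_def]; abel
  have hcombo : (matFun f M) z z = ((∑ t, f (a t) * ‖U z t‖ ^ 2 : ℝ) : ℂ) := by
    rw [hM_def, matFun_conj U hU a f]
    exact conj_entry U (fun t => f (a t)) z
  constructor
  · -- upper bound
    intro s hs
    have hsne : ((s : ℝ) : ℂ) ≠ 0 := by
      simpa using Complex.ofReal_ne_zero.mpr hs.ne'
    set v : n → ℂ := e - ((s : ℝ) : ℂ)⁻¹ • u with hv_def
    set R : Matrix n n ℂ := ((s : ℝ) : ℂ) • vecMulVec v (star v) with hR_def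
    have hRpsd : R.PosSemidef := psd_smul (psd_vecMulVec v) s hs.le
    set Q : Matrix n n ℂ := M + R with hQ_def
    have hQpd : Q.PosDef := hMpd.add_posSemidef hRpsd
    have hQM : Q - M = R := by rw [hQ_def]; abel
    have hsve : star v ⬝ᵥ e = 1 := by
      rw [dot_single_left]
      simp [hv_def, huz, he_def, Pi.single_eq_same]
    have hQe : Q *ᵥ e = ((m + s : ℝ) : ℂ) • e := by
      rw [hQ_def, add_mulVec, hMe, hR_def, smul_mulVec, vmv_mulVec, hsve, one_smul,
        hv_def, smul_sub, smul_smul, mul_inv_cancel₀ hsne, one_smul]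
      push_cast
      module
    have hpsd := hf n M Q hMpd hQpd (by rw [hQM]; exact hRpsd)
    have hQzz : (matFun f Q) z z = ((f (m + s) : ℝ) : ℂ) :=
      matFun_entry_eigen Q hQpd.1 f z (m + s) hQe
    exact entry_le z hpsd hcombo hQzz
  · -- lower bound
    intro y hy hαy
    have hw2 : ∀ t, (0 : ℝ) ≤ ‖U z t‖ ^ 2 := fun t => by positivity
    have hw1 : ∑ t, ‖U z t‖ ^ 2 = 1 := rowsum U hUU z
    have hCS : 1 ≤ α * m := by
      have h := Finset.sum_sq_le_sum_mul_sum_of_sq_eq_mul Finset.univ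
        (r := fun t => ‖U z t‖ ^ 2) (f := fun t => (a t)⁻¹ * ‖U z t‖ ^ 2)
        (g := fun t => a t * ‖U z t‖ ^ 2)
        (fun t _ => mul_nonneg (inv_nonneg.mpr (ha t).le) (hw2 t))
        (fun t _ => mul_nonneg (ha t).le (hw2 t))
        (fun t _ => by
          have : (a t) ≠ 0 := (ha t).ne'
          field_simp)
      rw [hw1] at h
      simpa using h
    have hα0 : 0 ≤ α := Finset.sum_nonneg fun t _ =>
      mul_nonneg (inv_nonneg.mpr (ha t).le) (hw2 t)
    have hm0 : 0 ≤ m := Finset.sum_nonneg fun t _ => mul_nonneg (ha t).le (hw2 t)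
    have hαpos : 0 < α := by nlinarith
    have hmpos : 0 < m := by nlinarith
    have hym : y < m := by nlinarith
    set s' : ℝ := m - y with hs'_def
    have hs'pos : 0 < s' := sub_pos.mpr hym
    have hs'ne : ((s' : ℝ) : ℂ) ≠ 0 := by
      simpa using Complex.ofReal_ne_zero.mpr hs'pos.ne'
    set w : n → ℂ := e + ((s' : ℝ) : ℂ)⁻¹ • u with hw_def
    set N : Matrix n n ℂ := M - ((s' : ℝ) : ℂ) • vecMulVec w (star w) with hN_def
    have hswe : star w ⬝ᵥ e = 1 := by
      rw [dot_single_left]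
      simp [hw_def, huz, he_def, Pi.single_eq_same]
    have hNe : N *ᵥ e = ((y : ℝ) : ℂ) • e := by
      rw [hN_def, sub_mulVec, hMe, smul_mulVec, vmv_mulVec, hswe, one_smul,
        hw_def, smul_add, smul_smul, mul_inv_cancel₀ hs'ne, one_smul]
      have : ((y : ℝ) : ℂ) = ((m : ℝ) : ℂ) - ((s' : ℝ) : ℂ) := by
        rw [hs'_def]; push_cast; ring
      rw [this]
      module
    -- square root matrices
    set S : Matrix n n ℂ := U * diagonal (fun t => ((Real.sqrt (a t) : ℝ) : ℂ)) * star U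
      with hS_def
    set T : Matrix n n ℂ := U * diagonal (fun t => (((Real.sqrt (a t))⁻¹ : ℝ) : ℂ)) * star U
      with hT_def
    have hSherm : S.IsHermitian := herm_conj U _
    have hTherm : T.IsHermitian := herm_conj U _
    have hsqrt_pos : ∀ t, 0 < Real.sqrt (a t) := fun t => Real.sqrt_pos.mpr (ha t)
    have hSS : S * S = M := by
      rw [hS_def, prod_conj U hU]
      have hfn : (fun t => ((Real.sqrt (a t) * Real.sqrt (a t) : ℝ) : ℂ))
          = fun t => ((a t : ℝ) : ℂ) := by
        funext t
        rw [Real.mul_self_sqrt (ha t).le]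
      rw [hfn, hM_def]
    have hTS : T * S = 1 := by
      rw [hT_def, hS_def, prod_conj U hU]
      have : (fun t => (((Real.sqrt (a t))⁻¹ * Real.sqrt (a t) : ℝ) : ℂ)) = fun _ => (1 : ℂ) := by
        funext t
        rw [inv_mul_cancel₀ (hsqrt_pos t).ne']
        norm_num
      rw [this, diagonal_one, mul_one, hUU]
    have hST : S * T = 1 := by
      rw [hS_def, hT_def, prod_conj U hU]
      have : (fun t => ((Real.sqrt (a t) * (Real.sqrt (a t))⁻¹ : ℝ) : ℂ)) = fun _ => (1 : ℂ) := by
        funext t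
        rw [mul_inv_cancel₀ (hsqrt_pos t).ne']
        norm_num
      rw [this, diagonal_one, mul_one, hUU]
    have hTT : T * T = U * diagonal (fun t => (((a t)⁻¹ : ℝ) : ℂ)) * star U := by
      rw [hT_def, prod_conj U hU]
      have hfn : (fun t => (((Real.sqrt (a t))⁻¹ * (Real.sqrt (a t))⁻¹ : ℝ) : ℂ))
          = fun t => (((a t)⁻¹ : ℝ) : ℂ) := by
        funext t
        rw [← mul_inv, Real.mul_self_sqrt (ha t).le]
      rw [hfn]
    have hTTzz : (T * T) z z = (α : ℂ) := by
      rw [hTT]; exact conj_entry U (fun t => (a t)⁻¹) z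
    have hTM : T * M = S := by rw [← hSS, ← Matrix.mul_assoc, hTS, one_mul]
    set p : n → ℂ := T *ᵥ w with hp_def
    have hSp : S *ᵥ p = w := by rw [hp_def, mulVec_mulVec, hST, one_mulVec]
    set b : n → ℂ := T *ᵥ e with hb_def
    set c : n → ℂ := S *ᵥ e with hc_def
    have hTu : T *ᵥ u = c - (m : ℂ) • b := by
      rw [hu_def, mulVec_sub, mulVec_smul, mulVec_mulVec, hTM]
    have hp_eq : p = (((1 - m / s' : ℝ)) : ℂ) • b + (((s'⁻¹ : ℝ)) : ℂ) • c := by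
      rw [hp_def, hw_def, mulVec_add, mulVec_smul, hTu]
      have h1 : ((s' : ℝ) : ℂ)⁻¹ = (((s'⁻¹ : ℝ)) : ℂ) := by push_cast; ring
      have h2 : (((1 - m / s' : ℝ)) : ℂ) = 1 - ((m : ℝ) : ℂ) * (((s'⁻¹ : ℝ)) : ℂ) := by
        push_cast
        field_simp
      rw [h1, h2]
      module
    have dot_bb : star b ⬝ᵥ b = (α : ℂ) := by
      rw [hb_def, herm_dot T T hTherm z, hTTzz]
    have dot_bc : star b ⬝ᵥ c = 1 := by
      rw [hb_def, hc_def, herm_dot T S hTherm z, hTS, one_apply_eq]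
    have dot_cb : star c ⬝ᵥ b = 1 := by
      rw [hc_def, hb_def, herm_dot S T hSherm z, hST, one_apply_eq]
    have dot_cc : star c ⬝ᵥ c = (m : ℂ) := by
      rw [hc_def, herm_dot S S hSherm z, hSS, hMzz]
    set np : ℝ := (1 - m / s') ^ 2 * α + 2 * (1 - m / s') * s'⁻¹ + (s'⁻¹) ^ 2 * m with hnp_def
    have hpp : star p ⬝ᵥ p = ((np : ℝ) : ℂ) := by
      rw [hp_eq]
      have hexp : star ((((1 - m / s' : ℝ)) : ℂ) • b + (((s'⁻¹ : ℝ)) : ℂ) • c) ⬝ᵥ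
          ((((1 - m / s' : ℝ)) : ℂ) • b + (((s'⁻¹ : ℝ)) : ℂ) • c)
          = (((1 - m / s' : ℝ)) : ℂ) * (((1 - m / s' : ℝ)) : ℂ) * (star b ⬝ᵥ b)
            + (((1 - m / s' : ℝ)) : ℂ) * (((s'⁻¹ : ℝ)) : ℂ) * (star b ⬝ᵥ c)
            + (((s'⁻¹ : ℝ)) : ℂ) * (((1 - m / s' : ℝ)) : ℂ) * (star c ⬝ᵥ b)
            + (((s'⁻¹ : ℝ)) : ℂ) * (((s'⁻¹ : ℝ)) : ℂ) * (star c ⬝ᵥ c) := by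
        simp only [star_add, star_smul, add_dotProduct, dotProduct_add, smul_dotProduct,
          dotProduct_smul, smul_eq_mul, Complex.star_def, Complex.conj_ofReal]
        ring
      rw [hexp, dot_bb, dot_bc, dot_cb, dot_cc, hnp_def]
      push_cast
      ring
    have hnp_sum : (∑ i, ‖p i‖ ^ 2) = np := by
      have := (self_dot p).symm.trans hpp
      exact_mod_cast this
    have hs'np : s' * np < 1 := by
      have key : s' ^ 2 * np = α * y ^ 2 - 2 * y + m := by
        have hne : s' ≠ 0 := hs'pos.ne'
        rw [hnp_def]
        field_simp
        rw [hs'_def]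
        ring
      have h2 : α * y ^ 2 < y := by nlinarith
      nlinarith [sq_nonneg s']
    have hNherm : N.IsHermitian := hMherm.sub (psd_smul (psd_vecMulVec w) s' hs'pos.le).1
    have hNpd : N.PosDef := by
      refine PosDef.of_dotProduct_mulVec_pos hNherm fun x hx => ?_
      set q : n → ℂ := S *ᵥ x with hq_def
      have hq0 : q ≠ 0 := by
        intro h0
        apply hx
        have : T *ᵥ q = x := by rw [hq_def, mulVec_mulVec, hTS, one_mulVec]
        rw [← this, h0, mulVec_zero]
      have hMx : star x ⬝ᵥ (M *ᵥ x) = star q ⬝ᵥ q := by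
        rw [← hSS, ← mulVec_mulVec, dotProduct_mulVec, ← hSherm.eq]
        rw [← star_mulVec, hSherm.eq]
      have hwx : star w ⬝ᵥ x = star p ⬝ᵥ q := by
        rw [← hSp, star_mulVec, hSherm.eq, ← dotProduct_mulVec]
      have hstep : star x ⬝ᵥ (N *ᵥ x)
          = star q ⬝ᵥ q - ((s' : ℝ) : ℂ) * (star (star w ⬝ᵥ x) * (star w ⬝ᵥ x)) := by
        rw [hN_def, sub_mulVec, dotProduct_sub, hMx, smul_mulVec, dotProduct_smul,
          smul_eq_mul, vmv_dot]
      have habs : star (star w ⬝ᵥ x) * (star w ⬝ᵥ x) = ((‖star p ⬝ᵥ q‖ ^ 2 : ℝ) : ℂ) := by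
        rw [hwx, Complex.star_def, mul_comm, Complex.mul_conj, Complex.normSq_eq_norm_sq]
      rw [hstep, habs, self_dot q]
      have hreal : ((∑ i, ‖q i‖ ^ 2 : ℝ) : ℂ) - ((s' : ℝ) : ℂ) * ((‖star p ⬝ᵥ q‖ ^ 2 : ℝ) : ℂ)
          = (((∑ i, ‖q i‖ ^ 2) - s' * ‖star p ⬝ᵥ q‖ ^ 2 : ℝ) : ℂ) := by
        push_cast
        ring
      rw [hreal, Complex.zero_lt_real]
      have hqpos : 0 < ∑ i, ‖q i‖ ^ 2 := by
        obtain ⟨i, hi⟩ := Function.ne_iff.mp hq0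
        exact Finset.sum_pos' (fun j _ => by positivity)
          ⟨i, Finset.mem_univ i, pow_pos (norm_pos_iff.mpr hi) 2⟩
      have hcs := cs p q
      rw [hnp_sum] at hcs
      nlinarith
    have hMN : M - N = ((s' : ℝ) : ℂ) • vecMulVec w (star w) := by rw [hN_def]; abel
    have hpsd := hf n N M hNpd hMpd (by rw [hMN]; exact psd_smul (psd_vecMulVec w) s' hs'pos.le)
    have hNzz : (matFun f N) z z = ((f y : ℝ) : ℂ) :=
      matFun_entry_eigen N hNherm f z y hNe
    exact entry_le z hpsd hNzz hcombo

lemma jump (f : ℝ → ℝ)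
    (hf : ∀ (m : Type) [Fintype m] [DecidableEq m] (A B : Matrix m m ℂ),
      A.PosDef → B.PosDef → (B - A).PosSemidef → (matFun f A - matFun f B).PosSemidef)
    (x0 : ℝ) (hx0 : 0 < x0) (w' : ℝ) (h0 : 0 < w') (h1 : w' < 1) :
    ∃ y, 0 < y ∧ y < x0 ∧ f y ≤ w' * f (x0 / 2) + (1 - w') * f x0 := by
  have hww : Real.sqrt w' * Real.sqrt w' = w' := Real.mul_self_sqrt h0.le
  have hvv : Real.sqrt (1 - w') * Real.sqrt (1 - w') = 1 - w' :=
    Real.mul_self_sqrt (by linarith)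
  set R : Matrix (Fin 2) (Fin 2) ℂ := Matrix.of
    ![![((Real.sqrt w' : ℝ) : ℂ), ((-Real.sqrt (1 - w') : ℝ) : ℂ)],
      ![((Real.sqrt (1 - w') : ℝ) : ℂ), ((Real.sqrt w' : ℝ) : ℂ)]] with hR_def
  have hU : star R * R = 1 := by
    ext i j
    rw [Matrix.mul_apply, Fin.sum_univ_two]
    fin_cases i <;> fin_cases j <;>
      simp [hR_def, Matrix.one_apply, Complex.conj_ofReal] <;> push_cast <;> norm_cast <;>
      nlinarith [hww, hvv]
  set a : Fin 2 → ℝ := ![x0 / 2, x0] with ha_def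
  have hapos : ∀ t, 0 < a t := by
    intro t
    fin_cases t <;> simp [ha_def] <;> linarith
  have upper := (core f hf R hU a hapos 0).1
  have hR00 : R 0 0 = ((Real.sqrt w' : ℝ) : ℂ) := rfl
  have hR01 : R 0 1 = ((-Real.sqrt (1 - w') : ℝ) : ℂ) := rfl
  have hnorm0 : ‖R 0 0‖ ^ 2 = w' := by
    rw [hR00, Complex.norm_real, Real.norm_eq_abs, sq_abs, pow_two, hww]
  have hnorm1 : ‖R 0 1‖ ^ 2 = 1 - w' := by
    rw [hR01, Complex.norm_real, Real.norm_eq_abs, sq_abs, pow_two]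
    nlinarith [hvv]
  have hm2 : (∑ t, a t * ‖R 0 t‖ ^ 2) = x0 / 2 * w' + x0 * (1 - w') := by
    rw [Fin.sum_univ_two, hnorm0, hnorm1]
    simp [ha_def]
  have hcombo2 : (∑ t, f (a t) * ‖R 0 t‖ ^ 2) = f (x0 / 2) * w' + f x0 * (1 - w') := by
    rw [Fin.sum_univ_two, hnorm0, hnorm1]
    simp [ha_def]
  set m2 : ℝ := x0 / 2 * w' + x0 * (1 - w') with hm2_def
  have hm2lt : m2 < x0 := by rw [hm2_def]; nlinarith [mul_pos hx0 h0]
  have hm2pos : 0 < m2 := by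
    rw [hm2_def]
    nlinarith [mul_pos hx0 h0, mul_pos hx0 (by linarith : (0:ℝ) < 1 - w')]
  clear_value m2
  refine ⟨m2 + (x0 - m2) / 2, by linarith, by linarith, ?_⟩
  have h3 := upper ((x0 - m2) / 2) (by linarith)
  rw [hm2, hcombo2] at h3
  calc f (m2 + (x0 - m2) / 2) ≤ f (x0 / 2) * w' + f x0 * (1 - w') := h3
    _ = w' * f (x0 / 2) + (1 - w') * f x0 := by ring

end S18

/-- Classical case: for commuting `X = ∑ λ_z |z⟩⟨z|`, `Y = ∑ μ_z |z⟩⟨z|` (standard basis),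
`f` operator anti-monotone on `(0,∞)`, and a positive definite density operator
`τ = ∑ ν_t |φ_t⟩⟨φ_t|`, one has
`∑_{z,t} f(μ_z/ν_t) λ_z |⟨z|φ_t⟩|² ≤ ∑_z λ_z f(μ_z/τ_z)` with `τ_z = ⟨z|τ|z⟩`. -/
theorem stmt_18 (d : ℕ) (f : ℝ → ℝ)
    (hf : ∀ (n : Type) [Fintype n] [DecidableEq n] (A B : Matrix n n ℂ),
      A.PosDef → B.PosDef → (B - A).PosSemidef → (matFun f A - matFun f B).PosSemidef)
    (lam mu nu : Fin d → ℝ) (hlam : ∀ z, 0 ≤ lam z) (hmu : ∀ z, 0 < mu z)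
    (hnu : ∀ t, 0 < nu t) (hnu1 : ∑ t, nu t = 1)
    (φ : Fin d → (Fin d → ℂ))
    (hφ : ∀ s t, star (φ s) ⬝ᵥ φ t = if s = t then 1 else 0) :
    ∑ z, ∑ t, f (mu z / nu t) * (lam z * ‖φ t z‖ ^ 2) ≤
      ∑ z, lam z * f (mu z / (∑ t, nu t * ‖φ t z‖ ^ 2)) := by
  by_cases hd0 : d = 0
  · subst hd0
    simp at hnu1
  set U : Matrix (Fin d) (Fin d) ℂ := Matrix.of (fun i t => φ t i) with hU_def
  have hU : star U * U = 1 := by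
    ext s t
    rw [Matrix.mul_apply, Matrix.one_apply]
    have h := hφ s t
    simp only [dotProduct, Pi.star_apply] at h
    rw [← h]
    apply Finset.sum_congr rfl
    intro i _
    rfl
  have hUU : U * star U = 1 := mul_eq_one_comm.mp hU
  have main : ∀ z, ∑ t, f (mu z / nu t) * ‖φ t z‖ ^ 2 ≤
      f (mu z / (∑ t, nu t * ‖φ t z‖ ^ 2)) := by
    intro z
    have hw2 : ∀ t, (0 : ℝ) ≤ ‖φ t z‖ ^ 2 := fun t => by positivity
    have hw1 : ∑ t, ‖U z t‖ ^ 2 = 1 := S18.rowsum U hUU z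
    have hw1' : ∑ t, ‖φ t z‖ ^ 2 = 1 := by rw [← hw1]; rfl
    obtain ⟨t0, ht0⟩ : ∃ t, ‖φ t z‖ ^ 2 ≠ 0 := by
      by_contra hall
      push_neg at hall
      rw [Finset.sum_eq_zero (fun t _ => hall t)] at hw1'
      norm_num at hw1'
    have hτpos : 0 < ∑ t, nu t * ‖φ t z‖ ^ 2 :=
      Finset.sum_pos' (fun t _ => mul_nonneg (hnu t).le (hw2 t))
        ⟨t0, Finset.mem_univ t0, mul_pos (hnu t0) (lt_of_le_of_ne (hw2 t0) (Ne.symm ht0))⟩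
    set τz : ℝ := ∑ t, nu t * ‖φ t z‖ ^ 2 with hτ_def
    set x0 : ℝ := mu z / τz with hx0_def
    have hx0pos : 0 < x0 := div_pos (hmu z) hτpos
    set a : Fin d → ℝ := fun t => mu z / nu t with ha_def
    have hapos : ∀ t, 0 < a t := fun t => div_pos (hmu z) (hnu t)
    have lower := (S18.core f hf U hU a hapos z).2
    have hα : (∑ t, (a t)⁻¹ * ‖U z t‖ ^ 2) = τz / mu z := by
      calc ∑ t, (a t)⁻¹ * ‖U z t‖ ^ 2
          = ∑ t, (nu t * ‖φ t z‖ ^ 2) / mu z := by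
            apply Finset.sum_congr rfl
            intro t _
            have h1 : (a t)⁻¹ = nu t / mu z := by rw [ha_def, inv_div]
            have h2 : ‖U z t‖ = ‖φ t z‖ := rfl
            rw [h1, h2]
            ring
        _ = τz / mu z := by rw [← Finset.sum_div, hτ_def]
    have hlow : ∀ y, 0 < y → y < x0 → (∑ t, f (a t) * ‖U z t‖ ^ 2) ≤ f y := by
      intro y hy hyx
      apply lower y hy
      rw [hα, div_mul_eq_mul_div, div_lt_one (hmu z), mul_comm]
      rw [hx0_def] at hyx
      exact (lt_div_iff₀ hτpos).mp hyx
    have hgoal : (∑ t, f (a t) * ‖U z t‖ ^ 2) ≤ f x0 := by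
      apply le_of_forall_pos_le_add
      intro ε hε
      obtain ⟨C, hC_def⟩ : ∃ C : ℝ, C = f (x0 / 2) - f x0 := ⟨_, rfl⟩
      have hex : ∃ w' : ℝ, 0 < w' ∧ w' < 1 ∧ w' * C ≤ ε := by
        rcases le_or_gt C 0 with hC | hC
        · exact ⟨1 / 2, by norm_num, by norm_num, by nlinarith⟩
        · refine ⟨min (ε / C) (1 / 2), lt_min (div_pos hε hC) (by norm_num),
            lt_of_le_of_lt (min_le_right _ _) (by norm_num), ?_⟩
          calc min (ε / C) (1 / 2) * C ≤ (ε / C) * C :=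
                mul_le_mul_of_nonneg_right (min_le_left _ _) hC.le
            _ = ε := by field_simp
      obtain ⟨w', hw'0, hw'1, hw'C⟩ := hex
      obtain ⟨y, hy0, hyx, hyle⟩ := S18.jump f hf x0 hx0pos w' hw'0 hw'1
      calc (∑ t, f (a t) * ‖U z t‖ ^ 2) ≤ f y := hlow y hy0 hyx
        _ ≤ w' * f (x0 / 2) + (1 - w') * f x0 := hyle
        _ = f x0 + w' * C := by rw [hC_def]; ring
        _ ≤ f x0 + ε := by linarith
    exact hgoal
  calc ∑ z, ∑ t, f (mu z / nu t) * (lam z * ‖φ t z‖ ^ 2)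
      = ∑ z, lam z * ∑ t, f (mu z / nu t) * ‖φ t z‖ ^ 2 := by
        apply Finset.sum_congr rfl
        intro z _
        rw [Finset.mul_sum]
        apply Finset.sum_congr rfl
        intro t _
        ring
    _ ≤ ∑ z, lam z * f (mu z / (∑ t, nu t * ‖φ t z‖ ^ 2)) := by
        apply Finset.sum_le_sum
        intro z _
        exact mul_le_mul_of_nonneg_left (main z) (hlam z)
end
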